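/- Fix a positive integer d and v ∈ I(d). (1) For consecutive elements α > β of a v-chain C, odepth_C(β) = odepth_C(α) + 2 if and only if α has type H in C and p_h(α) > β; otherwise odepth_C(β) = odepth_C(α) + 1. (2) The o-depth in a v-chain of an element of type H is odd. (3) If an element of type V in a v-chain is the last element of its connected component, then its o-depth is even. (4) If a v-chain C contains an element of o-depth m, then for every odd m′ ≤ m, C contains an element of o-depth m′; and if for some even m′ ≤ m, C contains no element of o-depth m′, then the element α of C of o-depth m′ − 1 has type H in C and p_h(α) > β, where β is the immediate successor of α in C. (5) If α has type H in a v-chain C, then the depth of p_h(α) in 𝔖_C equals odepth_C(α) + 1; in particular this depth is even. -/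

import Mathlib

namespace OG

/-- `star d k = k* = 2d+1-k`. -/
def star (d k : ℕ) : ℕ := 2 * d + 1 - k

/-- `I(d,2d)`: the set of `d`-element subsets of `{1,…,2d}`. -/
def Idn (d : ℕ) : Set (Finset ℕ) :=
  {v | v.card = d ∧ ∀ k ∈ v, 1 ≤ k ∧ k ≤ 2 * d}

/-- The partial order on `I(d,2d)`: entrywise comparison of increasing enumerations. -/
def leI (x y : Finset ℕ) : Prop :=
  List.Forall₂ (· ≤ ·) (x.sort (· ≤ ·)) (y.sort (· ≤ ·))

/-- `I(d)`: elements of `I(d,2d)` containing exactly one of `k`, `k*` for each `k`,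
with evenly many entries exceeding `d`. -/
def Iset (d : ℕ) : Set (Finset ℕ) :=
  {v | v ∈ Idn d ∧ (∀ k, 1 ≤ k → k ≤ 2 * d → (k ∈ v ↔ star d k ∉ v)) ∧
       Even ((v.filter (fun k => d < k)).card)}

/-- membership in `N(v)`. -/
def inN (d : ℕ) (v : Finset ℕ) (p : ℕ × ℕ) : Prop :=
  1 ≤ p.1 ∧ p.1 ≤ 2 * d ∧ 1 ≤ p.2 ∧ p.2 ≤ 2 * d ∧ p.1 ∉ v ∧ p.2 ∈ v ∧ p.2 < p.1

/-- membership in `OR(v)`. -/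
def inOR (d : ℕ) (v : Finset ℕ) (p : ℕ × ℕ) : Prop :=
  1 ≤ p.1 ∧ p.1 ≤ 2 * d ∧ 1 ≤ p.2 ∧ p.2 ≤ 2 * d ∧ p.1 ∉ v ∧ p.2 ∈ v ∧ p.1 < star d p.2

/-- membership in `ON(v) = OR(v) ∩ N(v)`. -/
def inON (d : ℕ) (v : Finset ℕ) (p : ℕ × ℕ) : Prop := inN d v p ∧ inOR d v p

/-- membership in the diagonal `D(v)`. -/
def inDiag (d : ℕ) (v : Finset ℕ) (p : ℕ × ℕ) : Prop :=
  p.1 ∉ v ∧ p.2 ∈ v ∧ p.1 = star d p.2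

instance (d : ℕ) (v : Finset ℕ) : DecidablePred (inN d v) := fun p => by
  unfold inN; infer_instance

instance (d : ℕ) (v : Finset ℕ) : DecidablePred (inOR d v) := fun p => by
  unfold inOR; infer_instance

instance (d : ℕ) (v : Finset ℕ) : DecidablePred (inON d v) := fun p => by
  unfold inON; infer_instance

instance (d : ℕ) (v : Finset ℕ) : DecidablePred (inDiag d v) := fun p => by
  unfold inDiag; infer_instance

/-- `(R,C) > (r,c)` iff `R > r` and `C < c`. -/
def pgt (A B : ℕ × ℕ) : Prop := B.1 < A.1 ∧ A.2 < B.2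

instance : DecidableRel pgt := fun A B => by unfold pgt; infer_instance

/-- `(R,C)` dominates `(r,c)` iff `R ≥ r` and `C ≤ c`. -/
def pdom (A B : ℕ × ℕ) : Prop := B.1 ≤ A.1 ∧ A.2 ≤ B.2

/-- vertical projection `p_v(r,c) = (c*,c)`. -/
def pv (d : ℕ) (α : ℕ × ℕ) : ℕ × ℕ := (star d α.2, α.2)

/-- horizontal projection `p_h(r,c) = (r,r*)`. -/
def ph (d : ℕ) (α : ℕ × ℕ) : ℕ × ℕ := (α.1, star d α.1)

/-- `(r,c)^# = (c*,r*)`. -/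
def hash (d : ℕ) (α : ℕ × ℕ) : ℕ × ℕ := (star d α.2, star d α.1)

/-- A `v`-chain: a strictly decreasing (under `pgt`) list of elements of `ON(v)`. -/
def IsVChain (d : ℕ) (v : Finset ℕ) (C : List (ℕ × ℕ)) : Prop :=
  C.Chain' pgt ∧ ∀ α ∈ C, inON d v α

/-- Two consecutive elements `(r,c) > (R,C)` of a `v`-chain are connected
if `r* ≥ C` and `R > r*`. -/
def Connected (d : ℕ) (α β : ℕ × ℕ) : Prop :=
  β.2 ≤ star d α.1 ∧ star d α.1 < β.1

instance (d : ℕ) : ∀ α β, Decidable (Connected d α β) := fun α β => by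
  unfold Connected; infer_instance

/-- The connected components of a `v`-chain. -/
def components (d : ℕ) (C : List (ℕ × ℕ)) : List (List (ℕ × ℕ)) :=
  C.splitBy (fun a b => decide (Connected d a b))

/-- The three possible types of an element of a `v`-chain. -/
inductive VType | V | H | S
deriving DecidableEq

/-- The type of an element `α` of a `v`-chain `C`: type V if `α` is not the last element
of its connected component or that component has even cardinality; otherwise type H if
`p_h(α) ∈ N(v)` (i.e. `r > r*`) and type S if not. -/
def typeOf (d : ℕ) (C : List (ℕ × ℕ)) (α : ℕ × ℕ) : VType :=
  match (components d C).find? (fun g => decide (α ∈ g)) with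
  | some g =>
      if g.getLast? = some α ∧ Odd g.length then
        (if star d α.1 < α.1 then VType.H else VType.S)
      else VType.V
  | none => VType.V

/-- `𝔖_{C,α}`. -/
def SCa (d : ℕ) (C : List (ℕ × ℕ)) (α : ℕ × ℕ) : Multiset (ℕ × ℕ) :=
  match typeOf d C α with
  | VType.V => {pv d α}
  | VType.H => {pv d α, ph d α}
  | VType.S => {α, hash d α}

/-- `𝔖_C`: the multiset union of the `𝔖_{C,α}` over `α ∈ C`. -/
def SC (d : ℕ) (C : List (ℕ × ℕ)) : Multiset (ℕ × ℕ) :=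
  (C.map (fun α => SCa d C α)).sum

/-- `q_{C,α}`. -/
def qCa (d : ℕ) (C : List (ℕ × ℕ)) (α : ℕ × ℕ) : ℕ × ℕ :=
  match typeOf d C α with
  | VType.S => α
  | _ => pv d α

/-- A strictly decreasing chain of elements of the monomial `S`. -/
def IsChainIn (S : Multiset (ℕ × ℕ)) (L : List (ℕ × ℕ)) : Prop :=
  L.Chain' pgt ∧ ∀ β ∈ L, β ∈ S

/-- The depth of `α` in a monomial `S` of `N(v)`: the maximal length of a strictly
decreasing chain of elements of `S` ending at `α`. -/
noncomputable def depth (S : Multiset (ℕ × ℕ)) (α : ℕ × ℕ) : ℕ :=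
  sSup {k | ∃ L, IsChainIn S L ∧ L.getLast? = some α ∧ L.length = k}

/-- The o-depth of `α` in a `v`-chain `C`: the depth of `q_{C,α}` in `𝔖_C`. -/
noncomputable def odepthC (d : ℕ) (C : List (ℕ × ℕ)) (α : ℕ × ℕ) : ℕ :=
  depth (SC d C) (qCa d C α)

/-- The o-depth of `α` in a monomial `S` of `ON(v)`: the maximum of `odepthC` over
all `v`-chains in `S` containing `α`. -/
noncomputable def odepthM (d : ℕ) (v : Finset ℕ) (S : Multiset (ℕ × ℕ)) (α : ℕ × ℕ) : ℕ :=
  sSup {k | ∃ C, IsVChain d v C ∧ (∀ β ∈ C, β ∈ S) ∧ α ∈ C ∧ odepthC d C α = k}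

/-- A distinguished subset of `N(v)`. -/
def Distinguished (d : ℕ) (v : Finset ℕ) (S : Finset (ℕ × ℕ)) : Prop :=
  (∀ p ∈ S, inN d v p) ∧
  ∀ A ∈ S, ∀ B ∈ S, A ≠ B →
    A.1 ≠ B.1 ∧ A.2 ≠ B.2 ∧ (B.1 < A.1 → (B.1 < A.2 ∨ A.2 < B.2))

/-- The element of `I(d,2d)` attached to a distinguished subset `S` of `N(v)`:
remove from `v` the column indices of elements of `S` and add their row indices. -/
def toW (v : Finset ℕ) (S : Finset (ℕ × ℕ)) : Finset ℕ :=
  (v \ S.image Prod.snd) ∪ S.image Prod.fst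

/-- `w(C) = w_C`, the element of `I(d,2d)` attached to the `v`-chain `C` via the
distinguished subset `𝔖_C`. -/
def wC (d : ℕ) (v : Finset ℕ) (C : List (ℕ × ℕ)) : Finset ℕ :=
  toW v (SC d C).toFinset

/-- `w` ortho-dominates a monomial `S` in `ON(v)`: `w ≥ w(C)` for every `v`-chain
`C` contained in `S`. -/
def ODominates (d : ℕ) (v w : Finset ℕ) (S : Multiset (ℕ × ℕ)) : Prop :=
  ∀ C : List (ℕ × ℕ), IsVChain d v C → (∀ β ∈ C, β ∈ S) → leI (wC d v C) w

/-- `x` dominates a monomial `S` in `N(v)` (in the sense of the Grassmannian case):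
`x ≥ w_L` for every strictly decreasing chain `L` contained in `S`. -/
def Dominates (d : ℕ) (v x : Finset ℕ) (S : Multiset (ℕ × ℕ)) : Prop :=
  ∀ L : List (ℕ × ℕ), L.Chain' pgt → (∀ β ∈ L, β ∈ S) → leI (toW v L.toFinset) x

/-- The `v`-degree of `θ`: half the cardinality of `v \ θ`. -/
def vdeg (v θ : Finset ℕ) : ℕ := (v \ θ).card / 2

/-- the element next to `α` in the list `C`. -/
def nextInC (C : List (ℕ × ℕ)) (α : ℕ × ℕ) : Option (ℕ × ℕ) :=
  C[C.idxOf α + 1]?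

/-- The critical element of a `v`-chain: its first element whose horizontal projection
does not belong to `N(v)` (i.e. with `r ≤ r*`). -/
def critical (d : ℕ) (C : List (ℕ × ℕ)) : Option (ℕ × ℕ) :=
  C.find? (fun x => decide (x.1 ≤ star d x.1))

/-- `α` is the last element of its connected component in `C`. -/
def isCompLast (d : ℕ) (C : List (ℕ × ℕ)) (α : ℕ × ℕ) : Prop :=
  ∃ g ∈ components d C, g.getLast? = some α

/-- The condition (*): `α` has type H in `C` and `p_h(α) ≯ β'` for some `β' ∈ 𝔖_{C,β}`. -/
def starCond (d : ℕ) (C : List (ℕ × ℕ)) (α β : ℕ × ℕ) : Prop :=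
  typeOf d C α = VType.H ∧ ∃ β' ∈ SCa d C β, ¬ pgt (ph d α) β'

/-- A standard monomial in `I(d)`: a weakly decreasing sequence of elements of `I(d)`. -/
def IsStdMon (d : ℕ) (L : List (Finset ℕ)) : Prop :=
  (∀ θ ∈ L, θ ∈ Iset d) ∧ L.Chain' (fun a b => leI b a)

/-- A standard monomial is `w`-dominated if `w ≥ θ₁`. -/
def WDominated (w : Finset ℕ) (L : List (Finset ℕ)) : Prop :=
  ∀ θ, L.head? = some θ → leI θ w

/-- A standard monomial is `v`-compatible if each member is comparable with `v`
and distinct from `v`. -/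
def VCompatible (v : Finset ℕ) (L : List (Finset ℕ)) : Prop :=
  ∀ θ ∈ L, θ ≠ v ∧ (leI θ v ∨ leI v θ)

/-- The degree of a standard monomial: the sum of the `v`-degrees of its members. -/
def stdDeg (v : Finset ℕ) (L : List (Finset ℕ)) : ℕ :=
  (L.map (fun θ => vdeg v θ)).sum

end OG


namespace OGAux
open List

variable {α : Type*}

def IsSplit (R : α → α → Bool) (l : List α) (gs : List (List α)) : Prop :=
  gs.flatten = l ∧ [] ∉ gs ∧ (∀ g ∈ gs, g.Chain' (fun x y => R x y = true)) ∧
  gs.Chain' (fun a b => ∀ x ∈ a.getLast?, ∀ y ∈ b.head?, R x y = false)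

theorem isSplit_splitBy (R : α → α → Bool) (l : List α) : IsSplit R l (l.splitBy R) := by
  refine ⟨List.flatten_splitBy R l, List.nil_notMem_splitBy R l, ?_, ?_⟩
  · intro g hg
    have := List.isChain_of_mem_splitBy hg
    exact this
  · have := List.isChain_getLast_head_splitBy R l
    refine List.IsChain.imp ?_ this
    rintro a b ⟨ha, hb, hr⟩ x hx y hy
    rw [List.getLast?_eq_getLast ha, Option.mem_some_iff] at hx
    rw [List.head?_eq_head hb, Option.mem_some_iff] at hy
    subst hx; subst hy; exact hr

theorem prefix_group_aux {R : α → α → Bool} {g h A B : List α}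
    (heq : g ++ A = h ++ B) (hg : g ≠ []) (hch : h.Chain' (fun x y => R x y = true))
    (hbd : ∀ x ∈ g.getLast?, ∀ y ∈ A.head?, R x y = false)
    (hlt : g.length < h.length) : False := by
  have hpre : g <+: h := by
    have : g <+: (h ++ B) := heq ▸ (List.prefix_append g A)
    exact List.prefix_of_prefix_length_le this (List.prefix_append h B) (le_of_lt hlt)
  obtain ⟨t, rfl⟩ := hpre
  have ht : t ≠ [] := by intro h0; subst h0; simp at hlt
  have hA : A = t ++ B := by
    rw [List.append_assoc] at heq
    exact (List.append_cancel_left heq)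
  unfold List.Chain' at hch; rw [List.isChain_append] at hch
  have htrue := hch.2.2 (g.getLast hg) (List.getLast?_eq_getLast hg)
      (t.head ht) (List.head?_eq_head ht)
  have hfalse := hbd (g.getLast hg) (List.getLast?_eq_getLast hg) (t.head ht) ?_
  · rw [hfalse] at htrue; exact Bool.false_ne_true htrue
  · rw [hA]
    cases t with
    | nil => exact absurd rfl ht
    | cons a t' => simp

theorem isSplit_unique {R : α → α → Bool} {l : List α} {gs hs : List (List α)}
    (h1 : IsSplit R l gs) (h2 : IsSplit R l hs) : gs = hs := by
  induction gs generalizing l hs with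
  | nil =>
    obtain ⟨hf, _, _, _⟩ := h1
    cases hs with
    | nil => rfl
    | cons h hs' =>
      obtain ⟨hf2, hn2, _, _⟩ := h2
      exfalso; subst hf2; simp at hf
      exact hn2 (by simp [hf.1])
  | cons g gs' IH =>
    obtain ⟨hf, hn, hc, hb⟩ := h1
    cases hs with
    | nil =>
      obtain ⟨hf2, _, _, _⟩ := h2
      exfalso; subst hf2; simp at hf
      exact hn (by simp [hf.1])
    | cons h hs' =>
      obtain ⟨hf2, hn2, hc2, hb2⟩ := h2
      have hgne : g ≠ [] := fun h0 => hn (h0 ▸ List.mem_cons_self)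
      have hhne : h ≠ [] := fun h0 => hn2 (h0 ▸ List.mem_cons_self)
      have heq : g ++ gs'.flatten = h ++ hs'.flatten := by
        simp only [List.flatten_cons] at hf hf2
        rw [hf, hf2]
      have hbd1 : ∀ x ∈ g.getLast?, ∀ y ∈ gs'.flatten.head?, R x y = false := by
        intro x hx y hy
        cases hs'' : gs' with
        | nil => subst hs''; simp at hy
        | cons g2 t =>
          subst hs''
          have hg2ne : g2 ≠ [] := fun h0 =>
            hn (h0 ▸ List.mem_cons_of_mem _ (List.mem_cons_self))
          have hP := (List.isChain_cons_cons.1 hb).1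
          apply hP x hx y
          cases g2 with
          | nil => exact absurd rfl hg2ne
          | cons a t' => simpa using hy
      have hbd2 : ∀ x ∈ h.getLast?, ∀ y ∈ hs'.flatten.head?, R x y = false := by
        intro x hx y hy
        cases hs'' : hs' with
        | nil => subst hs''; simp at hy
        | cons g2 t =>
          subst hs''
          have hg2ne : g2 ≠ [] := fun h0 =>
            hn2 (h0 ▸ List.mem_cons_of_mem _ (List.mem_cons_self))
          have hP := (List.isChain_cons_cons.1 hb2).1
          apply hP x hx y
          cases g2 with
          | nil => exact absurd rfl hg2ne
          | cons a t' => simpa using hy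
      have hlen : g.length = h.length := by
        rcases lt_trichotomy g.length h.length with hlt | he | hgt
        · exact absurd (prefix_group_aux heq hgne (hc2 h (List.mem_cons_self)) hbd1 hlt)
            not_false
        · exact he
        · exact absurd (prefix_group_aux heq.symm hhne (hc g (List.mem_cons_self)) hbd2 hgt)
            not_false
      obtain ⟨hgh, hflat⟩ := List.append_inj heq hlen
      subst hgh
      congr 1
      apply IH (l := gs'.flatten)
      · exact ⟨rfl, fun h0 => hn (List.mem_cons_of_mem _ h0),
          fun g' hg' => hc g' (List.mem_cons_of_mem _ hg'), (List.isChain_cons.1 hb).2⟩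
      · exact ⟨hflat.symm, fun h0 => hn2 (List.mem_cons_of_mem _ h0),
          fun g' hg' => hc2 g' (List.mem_cons_of_mem _ hg'), (List.isChain_cons.1 hb2).2⟩

/-- head decomposition of splitBy -/
theorem splitBy_cons_spec (R : α → α → Bool) (l : List α) (hl : l ≠ []) :
    ∃ g l', l.splitBy R = g :: l'.splitBy R ∧ l = g ++ l' ∧ g ≠ [] ∧
      g.Chain' (fun x y => R x y = true) ∧
      (∀ x ∈ g.getLast?, ∀ y ∈ l'.head?, R x y = false) := by
  obtain ⟨hf, hn, hc, hb⟩ := isSplit_splitBy R l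
  cases hgs : l.splitBy R with
  | nil => exact absurd (hgs ▸ hf).symm hl
  | cons g gs' =>
    rw [hgs] at hf hn hc hb
    refine ⟨g, gs'.flatten, ?_, ?_, ?_, ?_, ?_⟩
    · congr 1
      apply isSplit_unique (R := R) (l := gs'.flatten)
      · exact ⟨rfl, fun h0 => hn (List.mem_cons_of_mem _ h0),
          fun g' hg' => hc g' (List.mem_cons_of_mem _ hg'), (List.isChain_cons.1 hb).2⟩
      · exact isSplit_splitBy R _
    · rw [← hf]; simp
    · exact fun h0 => hn (h0 ▸ List.mem_cons_self)
    · exact hc g (List.mem_cons_self)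
    · intro x hx y hy
      cases hgs' : gs' with
      | nil => subst hgs'; simp at hy
      | cons g2 t =>
        subst hgs'
        have hg2ne : g2 ≠ [] := fun h0 =>
          hn (h0 ▸ List.mem_cons_of_mem _ (List.mem_cons_self))
        have hP := (List.isChain_cons_cons.1 hb).1
        apply hP x hx y
        cases g2 with
        | nil => exact absurd rfl hg2ne
        | cons a t' => simpa using hy

end OGAux

namespace OGAux
open List

variable {α : Type*}

/-- Bool-valued relation test on adjacent indices (false out of range). -/
def RIdx (R : α → α → Bool) (l : List α) (j : ℕ) : Bool :=
  match l[j]?, l[j+1]? with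
  | some x, some y => R x y
  | _, _ => false

theorem RIdx_eq (R : α → α → Bool) (l : List α) (j : ℕ) (h : j + 1 < l.length) :
    RIdx R l j = R (l[j]'(by omega)) (l[j+1]'h) := by
  unfold RIdx
  rw [List.getElem?_eq_getElem (by omega : j < l.length), List.getElem?_eq_getElem h]

theorem RIdx_eq_false_of_ge (R : α → α → Bool) (l : List α) (j : ℕ) (h : l.length ≤ j + 1) :
    RIdx R l j = false := by
  unfold RIdx
  rw [List.getElem?_eq_none (by omega : l.length ≤ j + 1)]
  cases l[j]? <;> rfl

theorem RIdx_append_right (R : α → α → Bool) (g l' : List α) (k : ℕ) :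
    RIdx R (g ++ l') (g.length + k) = RIdx R l' k := by
  unfold RIdx
  rw [List.getElem?_append_right (by omega), List.getElem?_append_right (by omega)]
  congr 2 <;> omega

end OGAux

namespace OGAux
open List

variable {α : Type*}


theorem getElem_boundary (g l' : List α) (hgne : g ≠ []) (hl'ne : l' ≠ []) (k : ℕ)
    (hk : k + 1 = g.length) :
    ∃ (h1 : k < (g ++ l').length) (h2 : k + 1 < (g ++ l').length),
      (g ++ l')[k]'h1 = g.getLast hgne ∧ (g ++ l')[k+1]'h2 = l'.head hl'ne := by
  have hglen : 0 < g.length := List.length_pos_iff.2 hgne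
  have hl'len : 0 < l'.length := List.length_pos_iff.2 hl'ne
  refine ⟨by simp; omega, by simp; omega, ?_, ?_⟩
  · rw [List.getElem_append_left (by omega), List.getLast_eq_getElem]
    congr 1; omega
  · rw [List.getElem_append_right (by omega), List.head_eq_getElem]
    congr 1; omega

theorem splitBy_index_spec_aux (n : ℕ) :
    ∀ (R : α → α → Bool) (l : List α), l.length ≤ n → l.Nodup →
    ∀ (i : ℕ) (hi : i < l.length),
    ∃ a b, a ≤ i ∧ i ≤ b ∧ b < l.length ∧
      (0 < a → RIdx R l (a - 1) = false) ∧
      RIdx R l b = false ∧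
      (∀ j, a ≤ j → j < b → RIdx R l j = true) ∧
      ∃ g, (∀ (p : List α → Bool), (∀ g', p g' = true ↔ l[i] ∈ g') →
          (l.splitBy R).find? p = some g) ∧
        g.length = b + 1 - a ∧
        (∀ t (ht : t < g.length), ∃ h2 : a + t < l.length, g[t] = l[a + t]) := by
  induction n with
  | zero => intro R l hln hnd i hi; omega
  | succ n IH =>
  intro R l hln hnd i hi
  have hl : l ≠ [] := by intro h0; subst h0; simp at hi
  obtain ⟨g, l', hsplit, hgl, hgne, hgch, hgbd⟩ := splitBy_cons_spec R l hl
  subst hgl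
  have hglen : 0 < g.length := List.length_pos_iff.2 hgne
  by_cases hcase : i < g.length
  · -- i is in the first group
    refine ⟨0, g.length - 1, by omega, by omega, by simp; omega, by omega, ?_, ?_, ?_⟩
    · -- boundary at end of g
      by_cases hend : g.length < (g ++ l').length
      · have hl'ne : l' ≠ [] := by intro h0; subst h0; simp at hend
        obtain ⟨h1, h2, e1, e2⟩ := getElem_boundary g l' hgne hl'ne (g.length - 1) (by omega)
        rw [RIdx_eq R _ _ h2, e1, e2]
        exact hgbd _ (List.getLast?_eq_getLast hgne) _ (List.head?_eq_head hl'ne)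
      · exact RIdx_eq_false_of_ge R _ _ (by omega)
    · -- within g
      intro j hj hjb
      rw [RIdx_eq R _ _ (by simp; omega)]
      have e1 : (g ++ l')[j]'(by simp; omega) = g[j]'(by omega) :=
        List.getElem_append_left (by omega)
      have e2 : (g ++ l')[j+1]'(by simp; omega) = g[j+1]'(by omega) :=
        List.getElem_append_left (by omega)
      rw [e1, e2]
      have := List.isChain_iff_getElem.1 hgch j (by omega)
      simpa using this
    · refine ⟨g, ?_, by omega, ?_⟩
      · intro p hp
        rw [hsplit]
        apply List.find?_cons_of_pos
        rw [hp g]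
        have : (g ++ l')[i] = g[i]'hcase := List.getElem_append_left hcase
        rw [this]
        exact List.getElem_mem _
      · intro t ht
        refine ⟨by simp; omega, ?_⟩
        rw [List.getElem_append_left (by omega)]
        congr 1; omega
  · -- i is in the tail
    push_neg at hcase
    have hndl' : l'.Nodup := (List.nodup_append.1 hnd).2.1
    have hi' : i - g.length < l'.length := by simp at hi; omega
    have hl'ne : l' ≠ [] := by intro h0; subst h0; simp at hi'
    obtain ⟨a', b', ha'le, hleb', hb'lt, hstart', hend', hconn', g', hfind', hg'len, hg'elem⟩ :=
      IH R l' (by simp at hln; omega) hndl' (i - g.length) hi'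
    have heli : (g ++ l')[i] = l'[i - g.length]'hi' := List.getElem_append_right hcase
    refine ⟨a' + g.length, b' + g.length, by omega, by omega, by simp; omega, ?_, ?_, ?_, ?_⟩
    · -- start boundary
      intro _
      by_cases ha0 : 0 < a'
      · have hidx : a' + g.length - 1 = g.length + (a' - 1) := by omega
        rw [hidx, RIdx_append_right]
        exact hstart' ha0
      · have ha' : a' = 0 := by omega
        subst ha'
        obtain ⟨h1, h2, e1, e2⟩ := getElem_boundary g l' hgne hl'ne (0 + g.length - 1) (by omega)
        have hidx2 : 0 + g.length - 1 + 1 = g.length := by omega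
        rw [RIdx_eq R _ _ h2, e1, e2]
        exact hgbd _ (List.getLast?_eq_getLast hgne) _ (List.head?_eq_head hl'ne)
    · -- end boundary
      have hidx : b' + g.length = g.length + b' := by omega
      rw [hidx, RIdx_append_right]
      exact hend'
    · -- within
      intro j hj hjb
      have hidx : j = g.length + (j - g.length) := by omega
      rw [hidx, RIdx_append_right]
      exact hconn' _ (by omega) (by omega)
    · refine ⟨g', ?_, by omega, ?_⟩
      · intro p hp
        rw [hsplit]
        rw [List.find?_cons_of_neg]
        · apply hfind'
          intro g0
          rw [hp g0, heli]
        · rw [hp g]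
          rw [heli]
          intro hmem
          have hdisj := (List.nodup_append.1 hnd).2.2
          exact hdisj _ hmem _ (List.getElem_mem _) rfl
      · intro t ht
        obtain ⟨h2, he⟩ := hg'elem t ht
        refine ⟨by simp; omega, ?_⟩
        rw [he]
        have : (g ++ l')[a' + g.length + t]'(by simp; omega) = l'[a' + g.length + t - g.length]'(by omega) :=
          List.getElem_append_right (by omega)
        rw [this]
        congr 1; omega

theorem splitBy_index_spec (R : α → α → Bool) (l : List α) (hnd : l.Nodup)
    (i : ℕ) (hi : i < l.length) :
    ∃ a b, a ≤ i ∧ i ≤ b ∧ b < l.length ∧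
      (0 < a → RIdx R l (a - 1) = false) ∧
      RIdx R l b = false ∧
      (∀ j, a ≤ j → j < b → RIdx R l j = true) ∧
      ∃ g, (∀ (p : List α → Bool), (∀ g', p g' = true ↔ l[i] ∈ g') →
          (l.splitBy R).find? p = some g) ∧
        g.length = b + 1 - a ∧
        (∀ t (ht : t < g.length), ∃ h2 : a + t < l.length, g[t] = l[a + t]) :=
  splitBy_index_spec_aux l.length R l le_rfl hnd i hi

theorem splitBy_groups_last_aux (n : ℕ) :
    ∀ (R : α → α → Bool) (l : List α), l.length ≤ n →
    ∀ g ∈ l.splitBy R, ∃ b, ∃ hb : b < l.length,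
      g.getLast? = some (l[b]'hb) ∧ RIdx R l b = false := by
  induction n with
  | zero =>
    intro R l hln g hg
    have : l = [] := by cases l; rfl; simp at hln
    subst this; simp at hg
  | succ n IH =>
  intro R l hln g0 hg0
  have hl : l ≠ [] := by
    intro h0; subst h0; simp at hg0
  obtain ⟨g, l', hsplit, hgl, hgne, hgch, hgbd⟩ := splitBy_cons_spec R l hl
  subst hgl
  have hglen : 0 < g.length := List.length_pos_iff.2 hgne
  rw [hsplit] at hg0
  rcases List.mem_cons.1 hg0 with rfl | hmem
  · refine ⟨g0.length - 1, by simp; omega, ?_, ?_⟩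
    · rw [List.getLast?_eq_getLast hgne, List.getLast_eq_getElem]
      congr 1
      rw [List.getElem_append_left (by omega)]
    · by_cases hend : g0.length < (g0 ++ l').length
      · have hl'ne : l' ≠ [] := by intro h0; subst h0; simp at hend
        obtain ⟨h1, h2, e1, e2⟩ := getElem_boundary g0 l' hgne hl'ne (g0.length - 1) (by omega)
        rw [RIdx_eq R _ _ h2, e1, e2]
        exact hgbd _ (List.getLast?_eq_getLast hgne) _ (List.head?_eq_head hl'ne)
      · exact RIdx_eq_false_of_ge R _ _ (by omega)
  · obtain ⟨b, hb, hlast, hridx⟩ := IH R l' (by simp at hln; omega) g0 hmem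
    refine ⟨g.length + b, by simp; omega, ?_, ?_⟩
    · rw [hlast]
      congr 1
      rw [List.getElem_append_right (by omega)]
      congr 1; omega
    · rw [RIdx_append_right]
      exact hridx

theorem splitBy_groups_last (R : α → α → Bool) (l : List α) :
    ∀ g ∈ l.splitBy R, ∃ b, ∃ hb : b < l.length,
      g.getLast? = some (l[b]'hb) ∧ RIdx R l b = false :=
  splitBy_groups_last_aux l.length R l le_rfl

end OGAux

namespace OGMain
open OG OGAux List

/-- row and column of the i-th chain element (0 默认). -/
def rr (C : List (ℕ × ℕ)) (i : ℕ) : ℕ := (C.getD i (0,0)).1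
def cc (C : List (ℕ × ℕ)) (i : ℕ) : ℕ := (C.getD i (0,0)).2

/-- index-level connectivity -/
def conn (d : ℕ) (C : List (ℕ × ℕ)) (i : ℕ) : Prop :=
  i + 1 < C.length ∧ cc C (i+1) ≤ star d (rr C i) ∧ star d (rr C i) < rr C (i+1)

instance (d C i) : Decidable (conn d C i) := by unfold conn; infer_instance

/-- component start -/
def cstart (d : ℕ) (C : List (ℕ × ℕ)) : ℕ → ℕ
  | 0 => 0
  | i + 1 => if conn d C i then cstart d C i else i + 1

/-- extra-depth indicator -/
def del (d : ℕ) (C : List (ℕ × ℕ)) (i : ℕ) : ℕ :=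
  if i + 1 < C.length ∧ typeOf d C (C.getD i (0,0)) = VType.H ∧
      star d (rr C i) < cc C (i+1) then 1 else 0

/-- predicted depth of the i-th q-element -/
def Dep (d : ℕ) (C : List (ℕ × ℕ)) : ℕ → ℕ
  | 0 => 1
  | i + 1 => Dep d C i + 1 + del d C i

/-- rank function on monomial elements -/
def rho (d : ℕ) (C : List (ℕ × ℕ)) (p : ℕ × ℕ) : ℕ :=
  let i := C.findIdx (fun α => decide (p ∈ SCa d C α))
  if p.1 = rr C i ∧ typeOf d C (C.getD i (0,0)) = VType.H then Dep d C i + 1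
  else Dep d C i

/-- numeric goodness of a chain -/
def Good (d : ℕ) (C : List (ℕ × ℕ)) : Prop :=
  C.Chain' pgt ∧ ∀ p ∈ C, 1 ≤ p.2 ∧ p.2 < p.1 ∧ p.1 ≤ 2*d ∧ p.1 + p.2 ≤ 2*d

section Facts

variable {d : ℕ} {v : Finset ℕ} {C : List (ℕ × ℕ)}

theorem good_of_isVChain (h : IsVChain d v C) : Good d C := by
  refine ⟨h.1, fun p hp => ?_⟩
  obtain ⟨hN, hOR⟩ := h.2 p hp
  obtain ⟨_, h1, h2, h3, _, _, h4⟩ := hN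
  obtain ⟨_, _, _, _, _, _, h5⟩ := hOR
  unfold OG.star at h5
  omega

theorem getElem_eq (hi : i < C.length) : C[i] = (rr C i, cc C i) := by
  unfold rr cc
  rw [List.getD_eq_getElem _ _ hi]

theorem coords (hg : Good d C) (hi : i < C.length) :
    1 ≤ cc C i ∧ cc C i < rr C i ∧ rr C i ≤ 2*d ∧ rr C i + cc C i ≤ 2*d := by
  have := hg.2 (C[i]) (List.getElem_mem hi)
  rw [getElem_eq hi] at this
  exact this

instance : IsTrans (ℕ × ℕ) pgt :=
  ⟨fun a b c hab hbc => ⟨lt_trans hbc.1 hab.1, lt_trans hab.2 hbc.2⟩⟩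

theorem pairwise_pgt (hg : Good d C) : List.Pairwise pgt C :=
  List.isChain_iff_pairwise.1 hg.1

theorem pair_lt (hg : Good d C) (hij : i < j) (hj : j < C.length) :
    rr C j < rr C i ∧ cc C i < cc C j := by
  have := List.pairwise_iff_getElem.1 (pairwise_pgt hg) i j (by omega) hj hij
  rw [getElem_eq (by omega : i < C.length), getElem_eq hj] at this
  exact ⟨this.1, this.2⟩

theorem nodup (hg : Good d C) : C.Nodup :=
  (pairwise_pgt hg).imp (fun h => by
    intro he; rw [he] at h; exact lt_irrefl _ h.1)

theorem getElem_congr_idx {α : Type*} {l : List α} {m n : ℕ} (h : m = n) (hm : m < l.length) :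
    l[m]'hm = l[n]'(h ▸ hm) := by subst h; rfl

theorem RIdx_iff_conn {j : ℕ} :
    RIdx (fun a b => decide (Connected d a b)) C j = true ↔ conn d C j := by
  unfold RIdx conn
  by_cases h : j + 1 < C.length
  · rw [List.getElem?_eq_getElem (by omega : j < C.length), List.getElem?_eq_getElem h]
    simp only [decide_eq_true_eq]
    unfold Connected
    rw [getElem_eq h, getElem_eq (by omega : j < C.length)]
    constructor
    · intro hcon; exact ⟨h, hcon.1, hcon.2⟩
    · intro hcon; exact ⟨hcon.2.1, hcon.2.2⟩
  · rw [List.getElem?_eq_none (by omega : C.length ≤ j + 1)]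
    constructor
    · intro hf; exfalso; cases he : C[j]? <;> rw [he] at hf <;> simp at hf
    · intro hcon; exact absurd hcon.1 h

theorem RIdx_false_iff_conn {j : ℕ} :
    RIdx (fun a b => decide (Connected d a b)) C j = false ↔ ¬ conn d C j := by
  rw [← RIdx_iff_conn]
  simp

theorem type_spec (hg : Good d C) (hi : i < C.length) :
    ∃ a b, a ≤ i ∧ i ≤ b ∧ b < C.length ∧
      (0 < a → ¬ conn d C (a-1)) ∧ ¬ conn d C b ∧
      (∀ j, a ≤ j → j < b → conn d C j) ∧
      (∃ g ∈ components d C, ∃ hbn2 : b < C.length, g.getLast? = some (C[b]'hbn2) ∧ C[i] ∈ g) ∧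
      typeOf d C C[i] =
        (if i = b ∧ Odd (b + 1 - a) then
          (if star d (rr C i) < rr C i then VType.H else VType.S) else VType.V) := by
  classical
  obtain ⟨a, b, hai, hib, hbn, hstart, hend, hconn, g, hfind, hglen, hgelem⟩ :=
    splitBy_index_spec (fun a b => decide (Connected d a b)) C (nodup hg) i hi
  have hgne : g ≠ [] := by
    intro h0
    rw [h0] at hglen; simp at hglen; omega
  have hlastg : g.getLast? = some (C[b]'hbn) := by
    rw [List.getLast?_eq_getLast hgne, List.getLast_eq_getElem]
    obtain ⟨h2, he⟩ := hgelem (g.length - 1) (by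
      have := List.length_pos_iff.2 hgne; omega)
    rw [he]
    congr 1
    apply getElem_congr_idx
    omega
  have hfind2 : (components d C).find? (fun g => decide (C[i] ∈ g)) = some g := by
    unfold OG.components
    apply hfind
    intro g'
    simp
  refine ⟨a, b, hai, hib, hbn, fun h0 => (RIdx_false_iff_conn).1 (hstart h0),
    (RIdx_false_iff_conn).1 hend,
    fun j h1 h2 => (RIdx_iff_conn).1 (hconn j h1 h2), ?_, ?_⟩
  · refine ⟨g, List.mem_of_find?_eq_some hfind2, hbn, hlastg, ?_⟩
    have := List.find?_some hfind2
    simpa using this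
  · have hmatch : typeOf d C (C[i]) =
        (if g.getLast? = some (C[i]) ∧ Odd g.length then
          (if OG.star d (C[i]).1 < (C[i]).1 then VType.H else VType.S) else VType.V) := by
      unfold OG.typeOf
      rw [hfind2]
    rw [hmatch]
    apply if_congr
    · rw [hlastg, hglen, Option.some.injEq]
      constructor
      · rintro ⟨h1, h2⟩
        exact ⟨((nodup hg).getElem_inj_iff.1 h1).symm, h2⟩
      · rintro ⟨h1, h2⟩
        exact ⟨((nodup hg).getElem_inj_iff.2 h1.symm), h2⟩
    · rw [getElem_eq hi]
    · rfl

theorem cstart_le (d : ℕ) (C : List (ℕ × ℕ)) (i : ℕ) : cstart d C i ≤ i := by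
  induction i with
  | zero => simp [cstart]
  | succ i IH =>
    unfold cstart
    split
    · omega
    · omega

theorem cstart_succ (d : ℕ) (C : List (ℕ × ℕ)) (i : ℕ) :
    cstart d C (i+1) = if conn d C i then cstart d C i else i + 1 := rfl

theorem cstart_eq (hg : Good d C) {a i : ℕ} (h1 : a ≤ i)
    (h2 : a = 0 ∨ ¬ conn d C (a-1))
    (h3 : ∀ j, a ≤ j → j < i → conn d C j) : cstart d C i = a := by
  induction i with
  | zero => unfold cstart; omega
  | succ i IH =>
    by_cases hcase : a = i + 1
    · subst hcase
      unfold cstart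
      rcases h2 with h2 | h2
      · omega
      · simp at h2
        rw [if_neg h2]
    · have ha : a ≤ i := by omega
      have hc : conn d C i := h3 i ha (by omega)
      unfold cstart
      rw [if_pos hc]
      exact IH ha (fun j hj1 hj2 => h3 j hj1 (by omega))

theorem type_last_eq (hg : Good d C) (hi : i < C.length) (hnc : ¬ conn d C i) :
    typeOf d C C[i] =
      (if Odd (i + 1 - cstart d C i) then
        (if star d (rr C i) < rr C i then VType.H else VType.S) else VType.V) := by
  obtain ⟨a, b, hai, hib, hbn, hstart, hend, hconn, _, heq⟩ := type_spec hg hi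
  have hib' : i = b := by
    by_contra hne
    exact hnc (hconn i hai (by omega))
  subst hib'
  have hca : cstart d C i = a :=
    cstart_eq hg hai (by rcases Nat.eq_zero_or_pos a with h | h
                         · exact Or.inl h
                         · exact Or.inr (hstart h)) hconn
  rw [heq, hca]
  simp only [eq_self_iff_true, true_and]

theorem typeV_of_conn (hg : Good d C) (hi : i < C.length) (hc : conn d C i) :
    typeOf d C C[i] = VType.V := by
  obtain ⟨a, b, hai, hib, hbn, hstart, hend, hconn, _, heq⟩ := type_spec hg hi
  rw [heq, if_neg]
  rintro ⟨h1, h2⟩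
  exact hend (h1 ▸ hc)

theorem isCompLast_iff (hg : Good d C) (hi : i < C.length) :
    isCompLast d C (C[i]) ↔ ¬ conn d C i := by
  constructor
  · rintro ⟨g, hgmem, hlast⟩
    obtain ⟨b, hb, hlast2, hridx⟩ :=
      splitBy_groups_last (fun a b => decide (Connected d a b)) C g hgmem
    rw [hlast2, Option.some.injEq] at hlast
    have : b = i := (nodup hg).getElem_inj_iff.1 hlast
    subst this
    exact (RIdx_false_iff_conn).1 hridx
  · intro hnc
    obtain ⟨a, b, hai, hib, hbn, hstart, hend, hconn, ⟨g, hgmem, hbn2, hglast, _⟩, heq⟩ :=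
      type_spec hg hi
    have hib' : i = b := by
      by_contra hne
      exact hnc (hconn i hai (by omega))
    subst hib'
    exact ⟨g, hgmem, hglast⟩

theorem star_def (d k : ℕ) : OG.star d k = 2*d+1-k := rfl

theorem conn_lt (hc : conn d C i) : i + 1 < C.length := hc.1

theorem typeH_elim (hg : Good d C) (hi : i < C.length) (h : typeOf d C C[i] = VType.H) :
    ¬ conn d C i ∧ Odd (i + 1 - cstart d C i) ∧ star d (rr C i) < rr C i := by
  have hnc : ¬ conn d C i := by
    intro hc
    rw [typeV_of_conn hg hi hc] at h
    exact absurd h (by simp)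
  refine ⟨hnc, ?_, ?_⟩
  · by_contra hodd
    rw [type_last_eq hg hi hnc, if_neg hodd] at h
    exact absurd h (by simp)
  · by_contra hlt
    rw [type_last_eq hg hi hnc] at h
    by_cases hodd : Odd (i + 1 - cstart d C i)
    · rw [if_pos hodd, if_neg hlt] at h
      exact absurd h (by simp)
    · rw [if_neg hodd] at h
      exact absurd h (by simp)

theorem typeS_elim (hg : Good d C) (hi : i < C.length) (h : typeOf d C C[i] = VType.S) :
    ¬ conn d C i ∧ Odd (i + 1 - cstart d C i) ∧ rr C i ≤ star d (rr C i) := by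
  have hnc : ¬ conn d C i := by
    intro hc
    rw [typeV_of_conn hg hi hc] at h
    exact absurd h (by simp)
  refine ⟨hnc, ?_, ?_⟩
  · by_contra hodd
    rw [type_last_eq hg hi hnc, if_neg hodd] at h
    exact absurd h (by simp)
  · by_contra hlt
    push_neg at hlt
    rw [type_last_eq hg hi hnc] at h
    by_cases hodd : Odd (i + 1 - cstart d C i)
    · rw [if_pos hodd, if_pos hlt] at h
      exact absurd h (by simp)
    · rw [if_neg hodd] at h
      exact absurd h (by simp)

theorem typeV_last_elim (hg : Good d C) (hi : i < C.length) (h : typeOf d C C[i] = VType.V)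
    (hnc : ¬ conn d C i) : ¬ Odd (i + 1 - cstart d C i) := by
  intro hodd
  rw [type_last_eq hg hi hnc, if_pos hodd] at h
  by_cases hlt : star d (rr C i) < rr C i
  · rw [if_pos hlt] at h; exact absurd h (by simp)
  · rw [if_neg hlt] at h; exact absurd h (by simp)

/-- a "small" element that starts its component has type S -/
theorem small_S (hg : Good d C) (hi : i < C.length) (hr : 2 * rr C i ≤ 2 * d + 1)
    (hstart : i = 0 ∨ ¬ conn d C (i-1)) : typeOf d C C[i] = VType.S := by
  have hco := coords hg hi
  have hnc : ¬ conn d C i := by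
    rintro ⟨h1, h2, h3⟩
    have := (pair_lt hg (by omega : i < i + 1) h1).1
    rw [star_def] at h3
    omega
  have hcs : cstart d C i = i :=
    cstart_eq hg le_rfl hstart (fun j h1 h2 => by omega)
  rw [type_last_eq hg hi hnc, hcs]
  have h1 : i + 1 - i = 1 := by omega
  rw [h1, if_pos odd_one, if_neg (by rw [star_def]; omega)]

/-- everything after a small component-break is of type S -/
theorem later_S (hg : Good d C) (hij : i < j) (hj : j < C.length)
    (hlast : ¬ conn d C i) (hsmall : 2 * rr C (i+1) ≤ 2 * d + 1) :
    typeOf d C C[j] = VType.S := by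
  have hij1 : i + 1 ≤ j := hij
  have hrj : 2 * rr C j ≤ 2 * d + 1 := by
    rcases Nat.eq_or_lt_of_le hij1 with he | hlt
    · rw [← he]; exact hsmall
    · have := (pair_lt hg (by omega : i + 1 < j) hj).1
      omega
  apply small_S hg hj hrj
  rcases Nat.eq_or_lt_of_le hij1 with he | hlt
  · right
    have hj1 : j - 1 = i := by omega
    rw [hj1]; exact hlast
  · right
    rintro ⟨h1, h2, h3⟩
    have hj1 : j - 1 < C.length := by omega
    have hr1 : rr C (j-1) ≤ rr C (i+1) := by
      rcases Nat.eq_or_lt_of_le (by omega : i + 1 ≤ j - 1) with he2 | hlt2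
      · rw [he2]
      · exact le_of_lt (pair_lt hg hlt2 hj1).1
    rw [star_def] at h3
    have hj11 : j - 1 + 1 = j := by omega
    rw [hj11] at h3
    have := (pair_lt hg (by omega : j - 1 < j) hj).1
    omega

theorem Dep_succ (d : ℕ) (C : List (ℕ × ℕ)) (i : ℕ) :
    Dep d C (i+1) = Dep d C i + 1 + del d C i := rfl

theorem Dep_pos (d : ℕ) (C : List (ℕ × ℕ)) (i : ℕ) : 1 ≤ Dep d C i := by
  induction i with
  | zero => simp [Dep]
  | succ i IH => rw [Dep_succ]; omega

theorem Dep_add_le (d : ℕ) (C : List (ℕ × ℕ)) {i j : ℕ} (h : i ≤ j) :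
    Dep d C i + (j - i) ≤ Dep d C j := by
  induction j with
  | zero =>
    have : i = 0 := by omega
    subst this; simp
  | succ j IH =>
    rcases Nat.eq_or_lt_of_le h with he | hlt
    · subst he; simp
    · have := IH (by omega)
      rw [Dep_succ]
      omega

theorem Dep_lt (d : ℕ) (C : List (ℕ × ℕ)) {i j : ℕ} (h : i < j) :
    Dep d C i < Dep d C j := by
  have := Dep_add_le d C (le_of_lt h)
  omega

theorem del_one (hi : i + 1 < C.length) (hH : typeOf d C (C[i]'(by omega)) = VType.H)
    (hlt : star d (rr C i) < cc C (i+1)) : del d C i = 1 := by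
  unfold del
  rw [if_pos]
  refine ⟨hi, ?_, hlt⟩
  rw [List.getD_eq_getElem _ _ (by omega : i < C.length)]
  exact hH

/-- key step bound : `Dep j + 1 < Dep i` provided `i = j+1 → del j = 1`. -/
theorem Dep_step (d : ℕ) (C : List (ℕ × ℕ)) {i j : ℕ} (h : j < i)
    (hdel : i = j + 1 → del d C j = 1) : Dep d C j + 1 < Dep d C i := by
  rcases Nat.eq_or_lt_of_le (by omega : j + 1 ≤ i) with he | hlt
  · have := hdel he.symm
    subst he
    rw [Dep_succ]
    omega
  · have h2 := Dep_add_le d C (le_of_lt hlt)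
    have h3 : Dep d C j + 1 ≤ Dep d C (j+1) := by rw [Dep_succ]; omega
    omega

theorem mem_listsum {β γ : Type*} {l : List β} {f : β → Multiset γ} {x : γ} :
    x ∈ (l.map f).sum ↔ ∃ b ∈ l, x ∈ f b := by
  induction l with
  | nil => simp
  | cons a l IH => simp [IH]

theorem mem_SC {p : ℕ × ℕ} :
    p ∈ SC d C ↔ ∃ i, ∃ hi : i < C.length, p ∈ SCa d C (C[i]'hi) := by
  unfold OG.SC
  rw [mem_listsum]
  constructor
  · rintro ⟨b, hb, hpb⟩
    obtain ⟨i, hi, rfl⟩ := List.mem_iff_getElem.1 hb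
    exact ⟨i, hi, hpb⟩
  · rintro ⟨i, hi, hp⟩
    exact ⟨C[i], List.getElem_mem hi, hp⟩

theorem mem_SCa_V {α p : ℕ × ℕ} (h : typeOf d C α = VType.V) :
    p ∈ SCa d C α ↔ p = pv d α := by
  unfold OG.SCa; rw [h]; simp

theorem mem_SCa_H {α p : ℕ × ℕ} (h : typeOf d C α = VType.H) :
    p ∈ SCa d C α ↔ p = pv d α ∨ p = ph d α := by
  unfold OG.SCa; rw [h]; simp

theorem mem_SCa_S {α p : ℕ × ℕ} (h : typeOf d C α = VType.S) :
    p ∈ SCa d C α ↔ p = α ∨ p = hash d α := by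
  unfold OG.SCa; rw [h]; simp

theorem pv_eq (hi : i < C.length) : pv d (C[i]'hi) = (star d (cc C i), cc C i) := by
  rw [getElem_eq hi]; rfl

theorem ph_eq (hi : i < C.length) : ph d (C[i]'hi) = (rr C i, star d (rr C i)) := by
  rw [getElem_eq hi]; rfl

theorem hash_eq (hi : i < C.length) : hash d (C[i]'hi) = (star d (cc C i), star d (rr C i)) := by
  rw [getElem_eq hi]; rfl

theorem cc_inj (hg : Good d C) (hi : i < C.length) (hj : j < C.length)
    (h : cc C i = cc C j) : i = j := by
  rcases lt_trichotomy i j with hlt | he | hgt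
  · have := (pair_lt hg hlt hj).2; omega
  · exact he
  · have := (pair_lt hg hgt hi).2; omega

theorem rr_inj (hg : Good d C) (hi : i < C.length) (hj : j < C.length)
    (h : rr C i = rr C j) : i = j := by
  rcases lt_trichotomy i j with hlt | he | hgt
  · have := (pair_lt hg hlt hj).1; omega
  · exact he
  · have := (pair_lt hg hgt hi).1; omega

/-- The hard impossibility: `pv αᵢ = ph αⱼ` never happens. -/
theorem pv_ne_ph (hg : Good d C) (hi : i < C.length) (hj : j < C.length)
    (htj : typeOf d C (C[j]'hj) = VType.H)
    (hti : typeOf d C (C[i]'hi) ≠ VType.S)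
    (h1 : cc C i = star d (rr C j)) : False := by
  have hcoi := coords hg hi
  have hcoj := coords hg hj
  obtain ⟨hnc, _, hsj⟩ := typeH_elim hg hj htj
  rcases lt_trichotomy i j with hlt | he | hgt
  · have := (pair_lt hg hlt hj).2
    rw [star_def] at h1
    omega
  · subst he
    rw [star_def] at h1 hsj
    omega
  · -- i > j : use the component break at j
    have hj1 : j + 1 < C.length := by omega
    rw [star_def] at h1 hsj
    have hncp : ¬ (cc C (j+1) ≤ star d (rr C j) ∧ star d (rr C j) < rr C (j+1)) := by
      intro hcp
      exact hnc ⟨hj1, hcp.1, hcp.2⟩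
    rw [star_def] at hncp
    push_neg at hncp
    by_cases hcs : cc C (j+1) ≤ 2*d+1 - rr C j
    · -- then rr (j+1) ≤ star (rr j) ≤ d : all later are S
      have hsm : 2 * rr C (j+1) ≤ 2*d + 1 := by
        have := hncp hcs
        omega
      exact hti (later_S hg hgt hi hnc hsm)
    · -- cc (j+1) > star (rr j) = cc i but cc (j+1) ≤ cc i
      have hcle : cc C (j+1) ≤ cc C i := by
        rcases Nat.eq_or_lt_of_le (by omega : j + 1 ≤ i) with he2 | hlt2
        · rw [he2]
        · exact le_of_lt (pair_lt hg hlt2 hi).2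
      omega

theorem tag_unique (hg : Good d C) (hi : i < C.length) (hj : j < C.length) {p : ℕ × ℕ}
    (hpi : p ∈ SCa d C (C[i]'hi)) (hpj : p ∈ SCa d C (C[j]'hj)) : i = j := by
  have hcoi := coords hg hi
  have hcoj := coords hg hj
  cases hti : typeOf d C (C[i]'hi) <;> cases htj : typeOf d C (C[j]'hj)
  case V.V =>
    rw [mem_SCa_V hti, pv_eq] at hpi
    rw [mem_SCa_V htj, pv_eq] at hpj
    subst hpi
    rw [Prod.mk.injEq] at hpj
    exact cc_inj hg hi hj hpj.2
  case V.H =>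
    rw [mem_SCa_V hti, pv_eq] at hpi
    rw [mem_SCa_H htj, pv_eq, ph_eq] at hpj
    subst hpi
    rcases hpj with hpj | hpj <;> rw [Prod.mk.injEq] at hpj
    · exact cc_inj hg hi hj hpj.2
    · exact absurd hpj.2 (by
        intro h2
        exact pv_ne_ph hg hi hj htj (by rw [hti]; simp) h2)
  case V.S =>
    rw [mem_SCa_V hti, pv_eq] at hpi
    rw [mem_SCa_S htj, hash_eq, getElem_eq hj] at hpj
    subst hpi
    rcases hpj with hpj | hpj <;> rw [Prod.mk.injEq] at hpj
    · exact cc_inj hg hi hj hpj.2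
    · apply cc_inj hg hi hj
      have := hpj.1
      rw [star_def, star_def] at this
      omega
  case H.V =>
    rw [mem_SCa_H hti, pv_eq, ph_eq] at hpi
    rw [mem_SCa_V htj, pv_eq] at hpj
    rcases hpi with hpi | hpi <;> subst hpi <;> rw [Prod.mk.injEq] at hpj
    · exact cc_inj hg hi hj hpj.2
    · exact absurd hpj.2.symm (by
        intro h2
        exact pv_ne_ph hg hj hi hti (by rw [htj]; simp) h2)
  case H.H =>
    rw [mem_SCa_H hti, pv_eq, ph_eq] at hpi
    rw [mem_SCa_H htj, pv_eq, ph_eq] at hpj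
    rcases hpi with hpi | hpi <;> subst hpi <;>
      rcases hpj with hpj | hpj <;> rw [Prod.mk.injEq] at hpj
    · exact cc_inj hg hi hj hpj.2
    · exact absurd hpj.2 (fun h2 => pv_ne_ph hg hi hj htj (by rw [hti]; simp) h2)
    · exact absurd hpj.2.symm (fun h2 => pv_ne_ph hg hj hi hti (by rw [htj]; simp) h2)
    · exact rr_inj hg hi hj hpj.1
  case H.S =>
    rw [mem_SCa_H hti, pv_eq, ph_eq] at hpi
    rw [mem_SCa_S htj, hash_eq, getElem_eq hj] at hpj
    have hrj := (typeS_elim hg hj htj).2.2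
    rw [star_def] at hrj
    rcases hpi with hpi | hpi <;> subst hpi <;>
      rcases hpj with hpj | hpj <;> rw [Prod.mk.injEq] at hpj
    · exact cc_inj hg hi hj hpj.2
    · apply cc_inj hg hi hj
      have := hpj.1; rw [star_def, star_def] at this; omega
    · exact rr_inj hg hi hj hpj.1
    · apply rr_inj hg hi hj
      have := hpj.2; rw [star_def, star_def] at this; omega
  case S.V =>
    rw [mem_SCa_S hti, hash_eq, getElem_eq hi] at hpi
    rw [mem_SCa_V htj, pv_eq] at hpj
    rcases hpi with hpi | hpi <;> subst hpi <;> rw [Prod.mk.injEq] at hpj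
    · exact cc_inj hg hi hj hpj.2
    · apply cc_inj hg hi hj
      have := hpj.1; rw [star_def, star_def] at this; omega
  case S.H =>
    rw [mem_SCa_S hti, hash_eq, getElem_eq hi] at hpi
    rw [mem_SCa_H htj, pv_eq, ph_eq] at hpj
    have hri := (typeS_elim hg hi hti).2.2
    rw [star_def] at hri
    rcases hpi with hpi | hpi <;> subst hpi <;>
      rcases hpj with hpj | hpj <;> rw [Prod.mk.injEq] at hpj
    · exact cc_inj hg hi hj hpj.2
    · exact rr_inj hg hi hj hpj.1
    · apply cc_inj hg hi hj
      have := hpj.1; rw [star_def, star_def] at this; omega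
    · apply rr_inj hg hi hj
      have := hpj.2; rw [star_def, star_def] at this; omega
  case S.S =>
    rw [mem_SCa_S hti, hash_eq, getElem_eq hi] at hpi
    rw [mem_SCa_S htj, hash_eq, getElem_eq hj] at hpj
    have hri := (typeS_elim hg hi hti).2.2
    have hrj := (typeS_elim hg hj htj).2.2
    rw [star_def] at hri hrj
    rcases hpi with hpi | hpi <;> subst hpi <;>
      rcases hpj with hpj | hpj <;> rw [Prod.mk.injEq] at hpj
    · exact rr_inj hg hi hj hpj.1
    · exfalso
      have := hpj.1; rw [star_def] at this; omega
    · exfalso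
      have := hpj.1; rw [star_def] at this; omega
    · apply cc_inj hg hi hj
      have := hpj.1; rw [star_def, star_def] at this; omega

theorem Dep_mono (d : ℕ) (C : List (ℕ × ℕ)) {i j : ℕ} (h : i ≤ j) :
    Dep d C i ≤ Dep d C j := by
  have := Dep_add_le d C h; omega

theorem idx_lt_of_cc (hg : Good d C) (hi : i < C.length) (hj : j < C.length)
    (h : cc C j < cc C i) : j < i := by
  by_contra hle
  push_neg at hle
  rcases Nat.eq_or_lt_of_le hle with he | hlt
  · subst he; omega
  · have := (pair_lt hg hlt hj).2; omega

theorem idx_lt_of_rr (hg : Good d C) (hi : i < C.length) (hj : j < C.length)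
    (h : rr C i < rr C j) : j < i := by
  by_contra hle
  push_neg at hle
  rcases Nat.eq_or_lt_of_le hle with he | hlt
  · subst he; omega
  · have := (pair_lt hg hlt hj).1; omega

theorem findIdx_tag (hg : Good d C) (hi : i < C.length) {p : ℕ × ℕ}
    (hp : p ∈ SCa d C (C[i]'hi)) :
    C.findIdx (fun α => decide (p ∈ SCa d C α)) = i := by
  rw [List.findIdx_eq hi]
  constructor
  · simpa using hp
  · intro j hji
    simp only [decide_eq_false_iff_not]
    intro hpj
    have := tag_unique hg (by omega) hi hpj hp
    omega

theorem rho_eval (hg : Good d C) (hi : i < C.length) {p : ℕ × ℕ}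
    (hp : p ∈ SCa d C (C[i]'hi)) :
    rho d C p = if p.1 = rr C i ∧ typeOf d C (C[i]'hi) = VType.H
      then Dep d C i + 1 else Dep d C i := by
  unfold rho
  rw [findIdx_tag hg hi hp]
  show (if p.1 = rr C i ∧ typeOf d C (C.getD i (0, 0)) = VType.H then Dep d C i + 1
      else Dep d C i) = _
  rw [List.getD_eq_getElem _ _ hi]

theorem rho_pv (hg : Good d C) (hi : i < C.length)
    (hp : pv d (C[i]'hi) ∈ SCa d C (C[i]'hi)) :
    rho d C (pv d (C[i]'hi)) = Dep d C i := by
  rw [rho_eval hg hi hp, if_neg]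
  rw [pv_eq]
  intro hcon
  have h1 := hcon.1
  simp only [star_def] at h1
  have := coords hg hi
  omega

theorem rho_phv (hg : Good d C) (hi : i < C.length) (hH : typeOf d C (C[i]'hi) = VType.H) :
    rho d C (ph d (C[i]'hi)) = Dep d C i + 1 := by
  rw [rho_eval hg hi (by rw [mem_SCa_H hH]; right; rfl), if_pos]
  rw [ph_eq]
  exact ⟨rfl, hH⟩

theorem rho_A (hg : Good d C) (hi : i < C.length) (hS : typeOf d C (C[i]'hi) = VType.S) :
    rho d C (C[i]'hi) = Dep d C i := by
  rw [rho_eval hg hi (by rw [mem_SCa_S hS]; left; rfl), if_neg]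
  rintro ⟨_, hcon⟩
  rw [hS] at hcon
  exact absurd hcon (by simp)

theorem rho_hash (hg : Good d C) (hi : i < C.length) (hS : typeOf d C (C[i]'hi) = VType.S) :
    rho d C (hash d (C[i]'hi)) = Dep d C i := by
  rw [rho_eval hg hi (by rw [mem_SCa_S hS]; right; rfl), if_neg]
  rw [hash_eq]
  intro hcon
  have h1 := hcon.1
  simp only [star_def] at h1
  have := coords hg hi
  omega

theorem rho_pos (hg : Good d C) {p : ℕ × ℕ} (hp : p ∈ SC d C) : 1 ≤ rho d C p := by
  obtain ⟨i, hi, hpi⟩ := mem_SC.1 hp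
  rw [rho_eval hg hi hpi]
  have := Dep_pos d C i
  split <;> omega

/-- monotonicity of the rank function along `pgt`. -/
theorem rho_mono (hg : Good d C) {p q : ℕ × ℕ} (hp : p ∈ SC d C) (hq : q ∈ SC d C)
    (hpq : pgt p q) : rho d C p < rho d C q := by
  obtain ⟨j, hj, hpj⟩ := mem_SC.1 hp
  obtain ⟨i, hi, hqi⟩ := mem_SC.1 hq
  have hcoi := coords hg hi
  have hcoj := coords hg hj
  obtain ⟨hpq1, hpq2⟩ := hpq
  cases htj : typeOf d C (C[j]'hj) <;> cases hti : typeOf d C (C[i]'hi)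
  case V.V =>
    rw [mem_SCa_V htj] at hpj; rw [mem_SCa_V hti] at hqi
    subst hpj; subst hqi
    rw [rho_pv hg hj (by rw [mem_SCa_V htj]), rho_pv hg hi (by rw [mem_SCa_V hti])]
    rw [pv_eq, pv_eq] at hpq1 hpq2
    exact Dep_lt d C (idx_lt_of_cc hg hi hj hpq2)
  case V.H =>
    rw [mem_SCa_V htj] at hpj; subst hpj
    rw [rho_pv hg hj (by rw [mem_SCa_V htj])]
    rw [mem_SCa_H hti] at hqi
    rcases hqi with hqi | hqi <;> subst hqi
    · rw [rho_pv hg hi (by rw [mem_SCa_H hti]; left; rfl)]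
      rw [pv_eq, pv_eq] at hpq1 hpq2
      exact Dep_lt d C (idx_lt_of_cc hg hi hj hpq2)
    · rw [rho_phv hg hi hti]
      rw [pv_eq, ph_eq] at hpq1 hpq2
      -- p = pv_j over q = ph_i : show j ≤ i
      have hji : j ≤ i := by
        by_contra hgt
        push_neg at hgt
        obtain ⟨hnc, _, hsi⟩ := typeH_elim hg hi hti
        have hi1 : i + 1 < C.length := by omega
        have hncp : ¬ (cc C (i+1) ≤ star d (rr C i) ∧ star d (rr C i) < rr C (i+1)) :=
          fun hcp => hnc ⟨hi1, hcp.1, hcp.2⟩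
        push_neg at hncp
        by_cases hcs : cc C (i+1) ≤ star d (rr C i)
        · have hsm : 2 * rr C (i+1) ≤ 2*d + 1 := by
            have h2 := hncp hcs
            rw [star_def] at h2 hsi
            omega
          have := later_S hg hgt hj hnc hsm
          rw [this] at htj
          exact absurd htj (by simp)
        · push_neg at hcs
          have hcle : cc C (i+1) ≤ cc C j := by
            rcases Nat.eq_or_lt_of_le (by omega : i + 1 ≤ j) with he2 | hlt2
            · rw [he2]
            · exact le_of_lt (pair_lt hg hlt2 hj).2
          omega
      have := Dep_mono d C hji
      omega
  case V.S =>
    rw [mem_SCa_V htj] at hpj; subst hpj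
    rw [rho_pv hg hj (by rw [mem_SCa_V htj])]
    rw [mem_SCa_S hti] at hqi
    rcases hqi with hqi | hqi <;> subst hqi
    · rw [rho_A hg hi hti]
      rw [pv_eq] at hpq1 hpq2
      rw [getElem_eq hi] at hpq1 hpq2
      exact Dep_lt d C (idx_lt_of_cc hg hi hj hpq2)
    · rw [rho_hash hg hi hti]
      rw [pv_eq, hash_eq] at hpq1 hpq2
      simp only [star_def] at hpq1
      exact Dep_lt d C (idx_lt_of_cc hg hi hj (by omega))
  case H.V =>
    rw [mem_SCa_V hti] at hqi; subst hqi
    rw [rho_pv hg hi (by rw [mem_SCa_V hti])]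
    rw [mem_SCa_H htj] at hpj
    rcases hpj with hpj | hpj <;> subst hpj
    · rw [rho_pv hg hj (by rw [mem_SCa_H htj]; left; rfl)]
      rw [pv_eq, pv_eq] at hpq1 hpq2
      exact Dep_lt d C (idx_lt_of_cc hg hi hj hpq2)
    · rw [rho_phv hg hj htj]
      rw [ph_eq, pv_eq] at hpq1 hpq2
      -- ph_j over pv_i
      have hji : j < i := by
        apply idx_lt_of_cc hg hi hj
        rw [star_def] at hpq2
        have := (typeH_elim hg hj htj).2.2
        rw [star_def] at this
        omega
      apply Dep_step d C hji
      intro hij1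
      apply del_one (by omega) htj
      have : cc C (j+1) = cc C i := by rw [hij1]
      rw [this]
      exact hpq2
  case H.H =>
    rw [mem_SCa_H htj] at hpj
    rw [mem_SCa_H hti] at hqi
    rcases hpj with hpj | hpj <;> subst hpj <;> rcases hqi with hqi | hqi <;> subst hqi
    · rw [rho_pv hg hj (by rw [mem_SCa_H htj]; left; rfl),
        rho_pv hg hi (by rw [mem_SCa_H hti]; left; rfl)]
      rw [pv_eq, pv_eq] at hpq1 hpq2
      exact Dep_lt d C (idx_lt_of_cc hg hi hj hpq2)
    · rw [rho_pv hg hj (by rw [mem_SCa_H htj]; left; rfl), rho_phv hg hi hti]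
      rw [pv_eq, ph_eq] at hpq1 hpq2
      have hji : j ≤ i := by
        by_contra hgt
        push_neg at hgt
        obtain ⟨hnc, _, hsi⟩ := typeH_elim hg hi hti
        have hi1 : i + 1 < C.length := by omega
        have hncp : ¬ (cc C (i+1) ≤ star d (rr C i) ∧ star d (rr C i) < rr C (i+1)) :=
          fun hcp => hnc ⟨hi1, hcp.1, hcp.2⟩
        push_neg at hncp
        by_cases hcs : cc C (i+1) ≤ star d (rr C i)
        · have hsm : 2 * rr C (i+1) ≤ 2*d + 1 := by
            have h2 := hncp hcs
            rw [star_def] at h2 hsi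
            omega
          have := later_S hg hgt hj hnc hsm
          rw [this] at htj
          exact absurd htj (by simp)
        · push_neg at hcs
          have hcle : cc C (i+1) ≤ cc C j := by
            rcases Nat.eq_or_lt_of_le (by omega : i + 1 ≤ j) with he2 | hlt2
            · rw [he2]
            · exact le_of_lt (pair_lt hg hlt2 hj).2
          omega
      have := Dep_mono d C hji
      omega
    · rw [rho_phv hg hj htj, rho_pv hg hi (by rw [mem_SCa_H hti]; left; rfl)]
      rw [ph_eq, pv_eq] at hpq1 hpq2
      have hji : j < i := by
        apply idx_lt_of_cc hg hi hj
        rw [star_def] at hpq2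
        have := (typeH_elim hg hj htj).2.2
        rw [star_def] at this
        omega
      apply Dep_step d C hji
      intro hij1
      apply del_one (by omega) htj
      have : cc C (j+1) = cc C i := by rw [hij1]
      rw [this]
      exact hpq2
    · rw [rho_phv hg hj htj, rho_phv hg hi hti]
      rw [ph_eq, ph_eq] at hpq1 hpq2
      have := Dep_lt d C (idx_lt_of_rr hg hi hj hpq1)
      omega
  case H.S =>
    rw [mem_SCa_H htj] at hpj
    rw [mem_SCa_S hti] at hqi
    have hsi := (typeS_elim hg hi hti).2.2
    rcases hpj with hpj | hpj <;> subst hpj <;> rcases hqi with hqi | hqi <;> subst hqi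
    · rw [rho_pv hg hj (by rw [mem_SCa_H htj]; left; rfl), rho_A hg hi hti]
      rw [pv_eq] at hpq1 hpq2
      rw [getElem_eq hi] at hpq1 hpq2
      exact Dep_lt d C (idx_lt_of_cc hg hi hj hpq2)
    · rw [rho_pv hg hj (by rw [mem_SCa_H htj]; left; rfl), rho_hash hg hi hti]
      rw [pv_eq, hash_eq] at hpq1 hpq2
      simp only [star_def] at hpq1
      exact Dep_lt d C (idx_lt_of_cc hg hi hj (by omega))
    · rw [rho_phv hg hj htj, rho_A hg hi hti]
      rw [ph_eq] at hpq1 hpq2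
      rw [getElem_eq hi] at hpq1 hpq2
      have hji : j < i := idx_lt_of_rr hg hi hj hpq1
      apply Dep_step d C hji
      intro hij1
      apply del_one (by omega) htj
      have : cc C (j+1) = cc C i := by rw [hij1]
      rw [this]
      exact hpq2
    · rw [rho_phv hg hj htj, rho_hash hg hi hti]
      rw [ph_eq, hash_eq] at hpq1 hpq2
      simp only [star_def] at hpq1 hpq2
      have hji : j < i := idx_lt_of_rr hg hi hj (by omega)
      apply Dep_step d C hji
      intro hij1
      apply del_one (by omega) htj
      have : cc C (j+1) = cc C i := by rw [hij1]
      rw [this, star_def]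
      omega
  case S.V =>
    exfalso
    rw [mem_SCa_S htj] at hpj
    rw [mem_SCa_V hti] at hqi
    subst hqi
    have hsj := (typeS_elim hg hj htj).2.2
    rcases hpj with hpj | hpj <;> subst hpj
    · rw [getElem_eq hj] at hpq1 hpq2
      rw [pv_eq] at hpq1 hpq2
      rw [star_def] at hpq1 hsj
      omega
    · -- hash_j over pv_i : impossible (everything after j has type S)
      rw [hash_eq, pv_eq] at hpq1 hpq2
      simp only [star_def] at hpq1 hpq2
      have hji : j < i := idx_lt_of_cc hg hi hj (by omega)
      have hnc := (typeS_elim hg hj htj).1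
      have hj1 : j + 1 < C.length := by omega
      have hsm : 2 * rr C (j+1) ≤ 2 * d + 1 := by
        have := (pair_lt hg (by omega : j < j+1) hj1).1
        rw [star_def] at hsj
        omega
      have := later_S hg hji hi hnc hsm
      rw [this] at hti
      exact absurd hti (by simp)
  case S.H =>
    exfalso
    rw [mem_SCa_S htj] at hpj
    rw [mem_SCa_H hti] at hqi
    have hsj := (typeS_elim hg hj htj).2.2
    have hsi := (typeH_elim hg hi hti).2.2
    rw [star_def] at hsj hsi
    rcases hpj with hpj | hpj <;> subst hpj <;> rcases hqi with hqi | hqi <;> subst hqi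
    · rw [getElem_eq hj, pv_eq] at hpq1 hpq2
      rw [star_def] at hpq1
      omega
    · rw [getElem_eq hj, ph_eq] at hpq1 hpq2
      omega
    · rw [hash_eq, pv_eq] at hpq1 hpq2
      simp only [star_def] at hpq1 hpq2
      omega
    · rw [hash_eq, ph_eq] at hpq1 hpq2
      simp only [star_def] at hpq1 hpq2
      omega
  case S.S =>
    rw [mem_SCa_S htj] at hpj
    rw [mem_SCa_S hti] at hqi
    have hsj := (typeS_elim hg hj htj).2.2
    have hsi := (typeS_elim hg hi hti).2.2
    rw [star_def] at hsj hsi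
    rcases hpj with hpj | hpj <;> subst hpj <;> rcases hqi with hqi | hqi <;> subst hqi
    · rw [rho_A hg hj htj, rho_A hg hi hti]
      rw [getElem_eq hj, getElem_eq hi] at hpq1 hpq2
      exact Dep_lt d C (idx_lt_of_rr hg hi hj hpq1)
    · exfalso
      rw [getElem_eq hj, hash_eq] at hpq1 hpq2
      simp only [star_def] at hpq1 hpq2
      omega
    · rw [rho_hash hg hj htj, rho_A hg hi hti]
      rw [hash_eq, getElem_eq hi] at hpq1 hpq2
      simp only [star_def] at hpq1 hpq2
      exact Dep_lt d C (idx_lt_of_rr hg hi hj (by omega))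
    · rw [rho_hash hg hj htj, rho_hash hg hi hti]
      rw [hash_eq, hash_eq] at hpq1 hpq2
      simp only [star_def] at hpq1 hpq2
      exact Dep_lt d C (idx_lt_of_cc hg hi hj (by omega))

theorem qCa_V {α : ℕ × ℕ} (h : typeOf d C α = VType.V) : qCa d C α = pv d α := by
  unfold OG.qCa; rw [h]

theorem qCa_H {α : ℕ × ℕ} (h : typeOf d C α = VType.H) : qCa d C α = pv d α := by
  unfold OG.qCa; rw [h]

theorem qCa_S {α : ℕ × ℕ} (h : typeOf d C α = VType.S) : qCa d C α = α := by
  unfold OG.qCa; rw [h]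

theorem q_mem_SCa (hi : i < C.length) : qCa d C (C[i]'hi) ∈ SCa d C (C[i]'hi) := by
  cases h : typeOf d C (C[i]'hi)
  · rw [qCa_V h, mem_SCa_V h]
  · rw [qCa_H h, mem_SCa_H h]; left; rfl
  · rw [qCa_S h, mem_SCa_S h]; left; rfl

theorem rho_qCa (hg : Good d C) (hi : i < C.length) :
    rho d C (qCa d C (C[i]'hi)) = Dep d C i := by
  cases h : typeOf d C (C[i]'hi)
  · rw [qCa_V h]; exact rho_pv hg hi (by rw [mem_SCa_V h])
  · rw [qCa_H h]; exact rho_pv hg hi (by rw [mem_SCa_H h]; left; rfl)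
  · rw [qCa_S h]; exact rho_A hg hi h

theorem del_cases (d : ℕ) (C : List (ℕ × ℕ)) (i : ℕ) : del d C i = 0 ∨ del d C i = 1 := by
  unfold del; split <;> simp

theorem del_one_elim (hdel : del d C i = 1) :
    ∃ hi1 : i + 1 < C.length, typeOf d C (C[i]'(Nat.lt_of_succ_lt (And.left ⟨hi1, hdel⟩))) = VType.H ∧
      star d (rr C i) < cc C (i+1) := by
  unfold del at hdel
  split at hdel
  · rename_i hcond
    obtain ⟨h1, h2, h3⟩ := hcond
    refine ⟨h1, ?_, h3⟩
    rw [List.getD_eq_getElem _ _ (by omega : i < C.length)] at h2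
    exact h2
  · simp at hdel

theorem del_zero_of_not_H (hi : i < C.length) (h : typeOf d C (C[i]'hi) ≠ VType.H) :
    del d C i = 0 := by
  rcases del_cases d C i with h0 | h1
  · exact h0
  · obtain ⟨_, hH, _⟩ := del_one_elim h1
    exact absurd hH h

theorem typeS_succ (hg : Good d C) (hi1 : i + 1 < C.length)
    (hS : typeOf d C (C[i]'(by omega)) = VType.S) :
    typeOf d C (C[i+1]'hi1) = VType.S := by
  obtain ⟨hnc, _, hsm⟩ := typeS_elim hg (by omega) hS
  rw [star_def] at hsm
  apply later_S hg (by omega : i < i + 1) hi1 hnc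
  have := (pair_lt hg (by omega : i < i + 1) hi1).1
  omega

/-- consecutive q's are pgt-decreasing -/
theorem F1 (hg : Good d C) (hi1 : i + 1 < C.length) :
    pgt (qCa d C (C[i]'(by omega))) (qCa d C (C[i+1]'hi1)) := by
  have hco := coords hg (by omega : i < C.length)
  have hco1 := coords hg hi1
  have hlt := pair_lt hg (by omega : i < i + 1) hi1
  cases hti : typeOf d C (C[i]'(by omega : i < C.length))
  case S =>
    have hti1 := typeS_succ hg hi1 hti
    rw [qCa_S hti, qCa_S hti1, getElem_eq, getElem_eq hi1]
    exact ⟨hlt.1, hlt.2⟩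
  case V =>
    rw [qCa_V hti, pv_eq]
    cases hti1 : typeOf d C (C[i+1]'hi1)
    · rw [qCa_V hti1, pv_eq]
      exact ⟨by simp only [star_def]; omega, by omega⟩
    · rw [qCa_H hti1, pv_eq]
      exact ⟨by simp only [star_def]; omega, by omega⟩
    · rw [qCa_S hti1, getElem_eq hi1]
      exact ⟨by simp only [star_def]; omega, by omega⟩
  case H =>
    rw [qCa_H hti, pv_eq]
    cases hti1 : typeOf d C (C[i+1]'hi1)
    · rw [qCa_V hti1, pv_eq]
      exact ⟨by simp only [star_def]; omega, by omega⟩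
    · rw [qCa_H hti1, pv_eq]
      exact ⟨by simp only [star_def]; omega, by omega⟩
    · rw [qCa_S hti1, getElem_eq hi1]
      exact ⟨by simp only [star_def]; omega, by omega⟩

theorem F2a (hg : Good d C) (hi : i < C.length) (hH : typeOf d C (C[i]'hi) = VType.H) :
    pgt (qCa d C (C[i]'hi)) (ph d (C[i]'hi)) := by
  have hco := coords hg hi
  rw [qCa_H hH, pv_eq, ph_eq]
  exact ⟨by simp only [star_def]; omega, by simp only [star_def]; omega⟩

theorem F2b (hg : Good d C) (hdel : del d C i = 1) :
    ∃ hi1 : i + 1 < C.length, pgt (ph d (C[i]'(Nat.lt_of_succ_lt (And.left ⟨hi1, hdel⟩)))) (qCa d C (C[i+1]'hi1)) := by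
  obtain ⟨hi1, hH, hlt⟩ := del_one_elim hdel
  have hco := coords hg (by omega : i < C.length)
  have hco1 := coords hg hi1
  have hpl := pair_lt hg (by omega : i < i + 1) hi1
  refine ⟨hi1, ?_⟩
  rw [ph_eq]
  rw [star_def] at hlt
  cases hti1 : typeOf d C (C[i+1]'hi1)
  case S =>
    rw [qCa_S hti1, getElem_eq hi1]
    exact ⟨by omega, by simp only [star_def]; omega⟩
  case V =>
    rw [qCa_V hti1, pv_eq]
    exact ⟨by simp only [star_def]; omega, by simp only [star_def]; omega⟩
  case H =>
    rw [qCa_H hti1, pv_eq]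
    exact ⟨by simp only [star_def]; omega, by simp only [star_def]; omega⟩

/-- the witnessing chain -/
def chainL (d : ℕ) (C : List (ℕ × ℕ)) : ℕ → List (ℕ × ℕ)
  | 0 => [qCa d C (C.getD 0 (0,0))]
  | i + 1 => chainL d C i ++
      (if del d C i = 1 then [ph d (C.getD i (0,0)), qCa d C (C.getD (i+1) (0,0))]
       else [qCa d C (C.getD (i+1) (0,0))])

theorem chain'_append_one {R : ℕ × ℕ → ℕ × ℕ → Prop} {l : List (ℕ × ℕ)} {x : ℕ × ℕ}
    (h : l.Chain' R) (hx : ∀ z ∈ l.getLast?, R z x) : (l ++ [x]).Chain' R := by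
  unfold List.Chain'; rw [List.isChain_append]
  exact ⟨h, List.isChain_singleton x, fun y hy z hz => by
    simp at hz; subst hz; exact hx y hy⟩

theorem chainL_spec (hg : Good d C) (hi : i < C.length) :
    (chainL d C i).Chain' pgt ∧ (∀ z ∈ chainL d C i, z ∈ SC d C) ∧
    (chainL d C i).getLast? = some (qCa d C (C[i]'hi)) ∧
    (chainL d C i).length = Dep d C i := by
  induction i with
  | zero =>
    refine ⟨List.isChain_singleton _, ?_, ?_, rfl⟩
    · intro z hz
      simp only [chainL, List.mem_singleton] at hz
      subst hz
      rw [List.getD_eq_getElem _ _ hi]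
      exact mem_SC.2 ⟨0, hi, q_mem_SCa hi⟩
    · simp only [chainL]
      rw [List.getD_eq_getElem _ _ hi]
      rfl
  | succ i IH =>
    obtain ⟨ih1, ih2, ih3, ih4⟩ := IH (by omega)
    have hgd : C.getD i (0,0) = C[i]'(by omega) := List.getD_eq_getElem _ _ (by omega)
    have hgd1 : C.getD (i+1) (0,0) = C[i+1]'hi := List.getD_eq_getElem _ _ hi
    rcases del_cases d C i with h0 | h1
    · have hch : chainL d C (i+1) = chainL d C i ++ [qCa d C (C[i+1]'hi)] := by
        show (chainL d C i ++ if del d C i = 1 then _ else _) = _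
        rw [h0, if_neg (by omega : ¬ (0:ℕ) = 1), hgd1]
      rw [hch]
      refine ⟨?_, ?_, List.getLast?_concat, ?_⟩
      · apply chain'_append_one ih1
        intro z hz
        rw [ih3, Option.mem_some_iff] at hz
        subst hz
        exact F1 hg hi
      · intro z hz
        rcases List.mem_append.1 hz with hz | hz
        · exact ih2 z hz
        · simp at hz; subst hz
          exact mem_SC.2 ⟨i+1, hi, q_mem_SCa hi⟩
      · rw [List.length_append, ih4, Dep_succ, h0]
        simp
    · obtain ⟨hi1, hH, hlt⟩ := del_one_elim h1
      have hch : chainL d C (i+1) =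
          chainL d C i ++ [ph d (C[i]'(by omega)), qCa d C (C[i+1]'hi)] := by
        show (chainL d C i ++ if del d C i = 1 then _ else _) = _
        rw [h1, if_pos rfl, hgd, hgd1]
      rw [hch]
      obtain ⟨_, hf2b⟩ := F2b hg h1
      refine ⟨?_, ?_, ?_, ?_⟩
      · unfold List.Chain'; rw [List.isChain_append]
        refine ⟨ih1, ?_, ?_⟩
        · exact List.isChain_pair.2 hf2b
        · intro y hy z hz
          rw [ih3, Option.mem_some_iff] at hy
          subst hy
          simp at hz
          subst hz
          exact F2a hg (by omega) hH
      · intro z hz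
        rcases List.mem_append.1 hz with hz | hz
        · exact ih2 z hz
        · simp at hz
          rcases hz with hz | hz <;> subst hz
          · exact mem_SC.2 ⟨i, by omega, by rw [mem_SCa_H hH]; right; rfl⟩
          · exact mem_SC.2 ⟨i+1, hi, q_mem_SCa hi⟩
      · rw [List.getLast?_append]
        rfl
      · rw [List.length_append, ih4, Dep_succ, h1]
        simp

theorem chain_len_bound (hg : Good d C) :
    ∀ (L : List (ℕ × ℕ)) (x : ℕ × ℕ), (x :: L).Chain' pgt →
      (∀ z ∈ x :: L, z ∈ SC d C) →
      (x :: L).length + rho d C x ≤ rho d C ((x :: L).getLast (by simp)) + 1 := by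
  intro L
  induction L with
  | nil => intro x _ _; simp; omega
  | cons z L' IH =>
    intro x hch hmem
    have h1 : pgt x z := (List.isChain_cons_cons.1 hch).1
    have h2 := rho_mono hg (hmem x (by simp)) (hmem z (by simp)) h1
    have h3 := IH z (List.isChain_cons_cons.1 hch).2 (fun w hw => hmem w (List.mem_cons_of_mem _ hw))
    rw [List.getLast_cons (by simp : z :: L' ≠ [])]
    simp only [List.length_cons] at h3 ⊢
    omega

theorem chain_le_rho (hg : Good d C) {L : List (ℕ × ℕ)} {y : ℕ × ℕ}
    (hch : IsChainIn (SC d C) L) (hlast : L.getLast? = some y) :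
    L.length ≤ rho d C y := by
  cases L with
  | nil => simp at hlast
  | cons x L' =>
    have hb := chain_len_bound hg L' x hch.1 hch.2
    have hy : (x :: L').getLast (by simp) = y := by
      rw [List.getLast?_eq_getLast (by simp), Option.some.injEq] at hlast
      exact hlast
    rw [hy] at hb
    have := rho_pos hg (hch.2 x (by simp))
    omega

theorem depth_eq_of {S : Multiset (ℕ × ℕ)} {y : ℕ × ℕ} {k : ℕ}
    (hex : ∃ L, IsChainIn S L ∧ L.getLast? = some y ∧ L.length = k)
    (hub : ∀ L, IsChainIn S L → L.getLast? = some y → L.length ≤ k) :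
    depth S y = k := by
  unfold OG.depth
  apply _root_.le_antisymm
  · apply csSup_le
    · obtain ⟨L, h1, h2, h3⟩ := hex
      exact ⟨k, L, h1, h2, h3⟩
    · rintro m ⟨L, h1, h2, h3⟩
      subst h3
      exact hub L h1 h2
  · apply le_csSup
    · refine ⟨k, ?_⟩
      rintro m ⟨L, h1, h2, h3⟩
      subst h3
      exact hub L h1 h2
    · obtain ⟨L, h1, h2, h3⟩ := hex
      exact ⟨L, h1, h2, h3⟩

theorem depth_q (hg : Good d C) (hi : i < C.length) :
    depth (SC d C) (qCa d C (C[i]'hi)) = Dep d C i := by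
  apply depth_eq_of
  · obtain ⟨h1, h2, h3, h4⟩ := chainL_spec hg hi
    exact ⟨chainL d C i, ⟨h1, h2⟩, h3, h4⟩
  · intro L hch hlast
    have := chain_le_rho hg hch hlast
    rwa [rho_qCa hg hi] at this

theorem depth_ph (hg : Good d C) (hi : i < C.length)
    (hH : typeOf d C (C[i]'hi) = VType.H) :
    depth (SC d C) (ph d (C[i]'hi)) = Dep d C i + 1 := by
  apply depth_eq_of
  · obtain ⟨h1, h2, h3, h4⟩ := chainL_spec hg hi
    refine ⟨chainL d C i ++ [ph d (C[i]'hi)], ⟨?_, ?_⟩, List.getLast?_concat, ?_⟩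
    · apply chain'_append_one h1
      intro z hz
      rw [h3, Option.mem_some_iff] at hz
      subst hz
      exact F2a hg hi hH
    · intro z hz
      rcases List.mem_append.1 hz with hz | hz
      · exact h2 z hz
      · simp at hz; subst hz
        exact mem_SC.2 ⟨i, hi, by rw [mem_SCa_H hH]; right; rfl⟩
    · rw [List.length_append, h4]; simp
  · intro L hch hlast
    have := chain_le_rho hg hch hlast
    rwa [rho_phv hg hi hH] at this

theorem Dep_run (hg : Good d C) (hi : i < C.length) :
    Dep d C i = Dep d C (cstart d C i) + (i - cstart d C i) := by
  induction i with
  | zero => simp [cstart]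
  | succ i IH =>
    by_cases hc : conn d C i
    · have hcs : cstart d C (i+1) = cstart d C i := by
        rw [cstart_succ, if_pos hc]
      have hV : typeOf d C (C[i]'(by omega)) = VType.V := typeV_of_conn hg (by omega) hc
      have hdel : del d C i = 0 := del_zero_of_not_H (by omega) (by rw [hV]; simp)
      have hle := cstart_le d C i
      rw [Dep_succ, hcs, IH (by omega), hdel]
      omega
    · have hcs : cstart d C (i+1) = i + 1 := by
        rw [cstart_succ, if_neg hc]
      rw [hcs]
      omega

theorem parity_invariant (hg : Good d C) (hi : i < C.length) :
    Odd (Dep d C (cstart d C i)) ∨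
      (2 * rr C i ≤ 2*d + 1 ∧ (i = 0 ∨ ¬ conn d C (i-1))) := by
  induction i with
  | zero => left; exact odd_one
  | succ i IH =>
    have hico : i < C.length := by omega
    rcases IH (by omega) with hodd | ⟨hsm, hst⟩
    · by_cases hc : conn d C i
      · left
        have hcs : cstart d C (i+1) = cstart d C i := by
          rw [cstart_succ, if_pos hc]
        rw [hcs]; exact hodd
      · have hcs : cstart d C (i+1) = i + 1 := by
          unfold cstart; rw [if_neg hc]
        have hrun := Dep_run hg hico
        have hle := cstart_le d C i
        cases hti : typeOf d C (C[i]'hico)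
        · -- V
          have hpar := typeV_last_elim hg hico hti hc
          have hdel : del d C i = 0 := del_zero_of_not_H hico (by rw [hti]; simp)
          left
          rw [hcs, Dep_succ, hdel]
          rw [Nat.odd_iff] at hodd ⊢
          rw [Nat.odd_iff] at hpar
          omega
        · -- H
          obtain ⟨_, hparodd, hsi⟩ := typeH_elim hg hico hti
          rcases del_cases d C i with h0 | h1
          · -- breaking H : all later rows small
            right
            have hncp : ¬ (cc C (i+1) ≤ star d (rr C i) ∧ star d (rr C i) < rr C (i+1)) :=
              fun hcp => hc ⟨hi, hcp.1, hcp.2⟩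
            have hnd : ¬ (i + 1 < C.length ∧ typeOf d C (C.getD i (0,0)) = VType.H ∧
                star d (rr C i) < cc C (i+1)) := by
              intro hcond
              unfold del at h0
              rw [if_pos hcond] at h0
              exact absurd h0 (by simp)
            push_neg at hnd
            have hnd2 := hnd hi (by rw [List.getD_eq_getElem _ _ hico]; exact hti)
            push_neg at hncp
            have h3 := hncp (by omega)
            rw [star_def] at hnd2 h3 hsi
            constructor
            · omega
            · right; simpa using hc
          · left
            rw [hcs, Dep_succ, h1, hrun]
            rw [Nat.odd_iff] at hodd hparodd ⊢
            omega
        · -- S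
          right
          have hsmall := (typeS_elim hg hico hti).2.2
          rw [star_def] at hsmall
          have := (pair_lt hg (by omega : i < i + 1) hi).1
          constructor
          · omega
          · right; simpa using hc
    · -- already in the small regime
      have hS : typeOf d C (C[i]'hico) = VType.S := small_S hg hico hsm hst
      have hnc := (typeS_elim hg hico hS).1
      right
      have := (pair_lt hg (by omega : i < i + 1) hi).1
      constructor
      · omega
      · right; simpa using hnc

theorem odd_Dep_of_H (hg : Good d C) (hi : i < C.length)
    (hH : typeOf d C (C[i]'hi) = VType.H) : Odd (Dep d C i) := by
  rcases parity_invariant hg hi with hodd | ⟨hsm, hst⟩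
  · obtain ⟨_, hpar, _⟩ := typeH_elim hg hi hH
    have hrun := Dep_run hg hi
    have hle := cstart_le d C i
    rw [Nat.odd_iff] at hodd hpar ⊢
    omega
  · have := small_S hg hi hsm hst
    rw [this] at hH
    exact absurd hH (by simp)

theorem even_Dep_of_Vlast (hg : Good d C) (hi : i < C.length)
    (hV : typeOf d C (C[i]'hi) = VType.V) (hnc : ¬ conn d C i) : Even (Dep d C i) := by
  rcases parity_invariant hg hi with hodd | ⟨hsm, hst⟩
  · have hpar := typeV_last_elim hg hi hV hnc
    have hrun := Dep_run hg hi
    have hle := cstart_le d C i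
    rw [Nat.even_iff]
    rw [Nat.odd_iff] at hodd
    rw [Nat.odd_iff] at hpar
    omega
  · have := small_S hg hi hsm hst
    rw [this] at hV
    exact absurd hV (by simp)

theorem achieve (hg : Good d C) (hi : i < C.length) :
    ∀ m', 1 ≤ m' → m' ≤ Dep d C i →
      (∃ j, j ≤ i ∧ Dep d C j = m') ∨
      (∃ j, j < i ∧ del d C j = 1 ∧ Dep d C j + 1 = m') := by
  induction i with
  | zero =>
    intro m' h1 h2
    left
    exact ⟨0, le_rfl, by simp [Dep] at h2 ⊢; omega⟩
  | succ i IH =>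
    intro m' h1 h2
    by_cases hle : m' ≤ Dep d C i
    · rcases IH (by omega) m' h1 hle with ⟨j, hj1, hj2⟩ | ⟨j, hj1, hj2, hj3⟩
      · exact Or.inl ⟨j, by omega, hj2⟩
      · exact Or.inr ⟨j, by omega, hj2, hj3⟩
    · push_neg at hle
      rw [Dep_succ] at h2
      rcases del_cases d C i with h0 | hd1
      · left; exact ⟨i+1, le_rfl, by rw [Dep_succ, h0]; omega⟩
      · by_cases hm : m' = Dep d C i + 1
        · right; exact ⟨i, by omega, hd1, hm.symm⟩
        · left; exact ⟨i+1, le_rfl, by rw [Dep_succ, hd1]; omega⟩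

theorem indexOf_getElem' (hg : Good d C) (hj : j < C.length) :
    List.idxOf (C[j]'hj) C = j := by
  unfold List.idxOf
  rw [List.findIdx_eq hj]
  constructor
  · simp
  · intro k hk
    simp only [beq_eq_false_iff_ne, ne_eq]
    intro he
    have := (nodup hg).getElem_inj_iff.1 he
    omega

theorem odepth_eq (hg : Good d C) (hi : i < C.length) :
    odepthC d C (C[i]'hi) = Dep d C i := by
  unfold OG.odepthC
  exact depth_q hg hi

theorem pgt_ph_iff (hg : Good d C) (hi1 : i + 1 < C.length) :
    pgt (ph d (C[i]'(by omega))) (C[i+1]'hi1) ↔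
      (rr C (i+1) < rr C i ∧ star d (rr C i) < cc C (i+1)) := by
  rw [ph_eq (show i < C.length by omega), getElem_eq hi1]
  exact Iff.rfl

theorem del_iff_cond (hg : Good d C) (hi1 : i + 1 < C.length) :
    del d C i = 1 ↔ (typeOf d C (C[i]'(by omega)) = VType.H ∧
      pgt (ph d (C[i]'(by omega))) (C[i+1]'hi1)) := by
  constructor
  · intro h1
    obtain ⟨_, hH, hlt⟩ := del_one_elim h1
    refine ⟨hH, ?_⟩
    rw [pgt_ph_iff hg hi1]
    exact ⟨(pair_lt hg (by omega : i < i + 1) hi1).1, hlt⟩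
  · rintro ⟨hH, hpgt⟩
    rw [pgt_ph_iff hg hi1] at hpgt
    exact del_one hi1 hH hpgt.2

end Facts
end OGMain


open OG in
/-- arithmetic of o-depths along a `v`-chain. -/
theorem stmt11 (d : ℕ) (hd : 0 < d) (v : Finset ℕ) (hv : v ∈ Iset d)
    (C : List (ℕ × ℕ)) (hC : IsVChain d v C) :
    -- (1)
    (∀ i : ℕ, ∀ hi : i + 1 < C.length,
      (odepthC d C (C[i+1]'hi) = odepthC d C (C[i]'(by omega)) + 2 ↔
        (typeOf d C (C[i]'(by omega)) = VType.H ∧ pgt (ph d (C[i]'(by omega))) (C[i+1]'hi))) ∧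
      (¬ (typeOf d C (C[i]'(by omega)) = VType.H ∧
            pgt (ph d (C[i]'(by omega))) (C[i+1]'hi)) →
        odepthC d C (C[i+1]'hi) = odepthC d C (C[i]'(by omega)) + 1)) ∧
    -- (2)
    (∀ α ∈ C, typeOf d C α = VType.H → Odd (odepthC d C α)) ∧
    -- (3)
    (∀ α ∈ C, typeOf d C α = VType.V → isCompLast d C α → Even (odepthC d C α)) ∧
    -- (4)
    (∀ m : ℕ, (∃ α ∈ C, odepthC d C α = m) →
      (∀ m' ≤ m, Odd m' → ∃ α ∈ C, odepthC d C α = m') ∧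
      (∀ m' ≤ m, Even m' → 0 < m' → (¬ ∃ α ∈ C, odepthC d C α = m') →
        ∃ α ∈ C, odepthC d C α = m' - 1 ∧ typeOf d C α = VType.H ∧
          ∃ β, nextInC C α = some β ∧ pgt (ph d α) β)) ∧
    -- (5)
    (∀ α ∈ C, typeOf d C α = VType.H →
      depth (SC d C) (ph d α) = odepthC d C α + 1 ∧
      Even (depth (SC d C) (ph d α))) := by
  have hg : OGMain.Good d C := OGMain.good_of_isVChain hC
  refine ⟨?_, ?_, ?_, ?_, ?_⟩
  · -- (1)
    intro i hi
    have e1 := OGMain.odepth_eq hg hi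
    have e0 := OGMain.odepth_eq hg (show i < C.length by omega)
    have hDs := OGMain.Dep_succ d C i
    constructor
    · rw [e1, e0, hDs]
      constructor
      · intro he
        have hdel : OGMain.del d C i = 1 := by omega
        exact (OGMain.del_iff_cond hg hi).1 hdel
      · intro hcond
        have hdel := (OGMain.del_iff_cond hg hi).2 hcond
        omega
    · intro hmcond
      rw [e1, e0, hDs]
      rcases OGMain.del_cases d C i with h0 | h1
      · omega
      · exact absurd ((OGMain.del_iff_cond hg hi).1 h1) hmcond
  · -- (2)
    intro α hα hH
    obtain ⟨i, hi, rfl⟩ := List.mem_iff_getElem.1 hα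
    rw [OGMain.odepth_eq hg hi]
    exact OGMain.odd_Dep_of_H hg hi hH
  · -- (3)
    intro α hα hV hlast
    obtain ⟨i, hi, rfl⟩ := List.mem_iff_getElem.1 hα
    rw [OGMain.odepth_eq hg hi]
    exact OGMain.even_Dep_of_Vlast hg hi hV ((OGMain.isCompLast_iff hg hi).1 hlast)
  · -- (4)
    rintro m ⟨α, hα, hm⟩
    obtain ⟨i0, hi0, rfl⟩ := List.mem_iff_getElem.1 hα
    rw [OGMain.odepth_eq hg hi0] at hm
    constructor
    · intro m' hm' hodd
      have h1 : 1 ≤ m' := by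
        rw [Nat.odd_iff] at hodd; omega
      rcases OGMain.achieve hg hi0 m' h1 (by omega) with ⟨j, hj1, hj2⟩ | ⟨j, hj1, hj2, hj3⟩
      · exact ⟨C[j]'(by omega), List.getElem_mem _,
          by rw [OGMain.odepth_eq hg (by omega)]; exact hj2⟩
      · exfalso
        obtain ⟨hj4, hH, _⟩ := OGMain.del_one_elim hj2
        have := OGMain.odd_Dep_of_H hg (by omega) hH
        rw [Nat.odd_iff] at this hodd
        omega
    · intro m' hm' heven h0 hnach
      rcases OGMain.achieve hg hi0 m' (by omega) (by omega) with ⟨j, hj1, hj2⟩ | ⟨j, hj1, hj2, hj3⟩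
      · exfalso
        exact hnach ⟨C[j]'(by omega), List.getElem_mem _,
          by rw [OGMain.odepth_eq hg (by omega)]; exact hj2⟩
      · obtain ⟨hj4, hH, hlt⟩ := OGMain.del_one_elim hj2
        refine ⟨C[j]'(by omega), List.getElem_mem _, ?_, hH, ?_⟩
        · rw [OGMain.odepth_eq hg (by omega)]
          omega
        · have hj4e : j < C.length := by omega
          refine ⟨C[j+1]'hj4, ?_, ?_⟩
          · unfold OG.nextInC
            rw [OGMain.indexOf_getElem' hg hj4e]
            exact List.getElem?_eq_getElem hj4
          · rw [OGMain.pgt_ph_iff hg hj4]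
            exact ⟨(OGMain.pair_lt hg (by omega : j < j + 1) hj4).1, hlt⟩
  · -- (5)
    intro α hα hH
    obtain ⟨i, hi, rfl⟩ := List.mem_iff_getElem.1 hα
    rw [OGMain.depth_ph hg hi hH, OGMain.odepth_eq hg hi]
    exact ⟨rfl, (OGMain.odd_Dep_of_H hg hi hH).add_one⟩
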